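/- arXiv:1904.02027 — 2 statements merged into one kernel-verified Lean document; each statement's English description precedes it below -/
import Mathlib

section
/- Let Φ be a non-uniform random 2-SAT formula on n variables with probability vector p satisfying p₁² = Θ(Σ_{i=1}^n pᵢ²) and q_max = o(1). Then: (i) if m = o((C·p₁·(Σ_{i=2}^n pᵢ²)^{1/2})^{-1}), Φ is satisfiable with probability at least 1 − o(1); and (ii) there exists a constant ε ∈ (0,1) such that for all m ≤ (1−ε)·(C·p₁·(Σ_{i=2}^n pᵢ²)^{1/2})^{-1}, Φ is satisfiable with probability at least some positive constant. -/
open Finset Filter Asymptotics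

open scoped Classical

/-- The probability of drawing a given ordered 2-clause (an ordered pair of literals over
distinct variables); an unordered 2-clause over variables `i ≠ j` then has total probability
`(C/2)·pᵢ·pⱼ` where `C = (1 - ∑ pᵢ²)⁻¹`. -/
noncomputable def clauseProb2 (n : ℕ) (p : ℕ → ℝ) (c : (Fin n × Bool) × (Fin n × Bool)) : ℝ :=
  if c.1.1 ≠ c.2.1 then
    (1 - ∑ i ∈ Finset.range n, p i ^ 2)⁻¹ / 4 * p c.1.1.1 * p c.2.1.1
  else 0

/-- The probability of drawing a given formula: `m` clauses drawn independently. -/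
noncomputable def formulaProb2 (n m : ℕ) (p : ℕ → ℝ)
    (Φ : Fin m → (Fin n × Bool) × (Fin n × Bool)) : ℝ :=
  ∏ j, clauseProb2 n p (Φ j)

/-- Satisfiability of a 2-CNF formula: a literal `(x, b)` is satisfied by an assignment `a`
iff `a x = b`. -/
def Sat2 {n m : ℕ} (Φ : Fin m → (Fin n × Bool) × (Fin n × Bool)) : Prop :=
  ∃ a : Fin n → Bool, ∀ j, a (Φ j).1.1 = (Φ j).1.2 ∨ a (Φ j).2.1 = (Φ j).2.2

/-- The probability that a non-uniform random 2-SAT formula with `n` variables, `m` clauses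
and variable distribution `p` is satisfiable. -/
noncomputable def probSat2 (n m : ℕ) (p : ℕ → ℝ) : ℝ :=
  ∑ Φ : Fin m → (Fin n × Bool) × (Fin n × Bool),
    if Sat2 Φ then formulaProb2 n m p Φ else 0

/-- The probability that a non-uniform random 2-SAT formula is unsatisfiable. -/
noncomputable def probUnsat2 (n m : ℕ) (p : ℕ → ℝ) : ℝ :=
  ∑ Φ : Fin m → (Fin n × Bool) × (Fin n × Bool),
    if ¬ Sat2 Φ then formulaProb2 n m p Φ else 0

/-- The normalization constant `C = (1 - ∑ pᵢ²)⁻¹`. -/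
noncomputable def Cconst (n : ℕ) (p : ℕ → ℝ) : ℝ :=
  (1 - ∑ i ∈ Finset.range n, p i ^ 2)⁻¹

/-- The maximum clause probability `q_max = (C/2)·p₁·p₂`. -/
noncomputable def qmax2 (n : ℕ) (p : ℕ → ℝ) : ℝ :=
  Cconst n p / 2 * p 0 * p 1

/-- `p n` is a probability vector on `n` variables (indexed `0,…,n-1`), sorted decreasingly,
with all entries positive. -/
def ProbEnsemble (p : ℕ → ℕ → ℝ) : Prop :=
  ∀ n, 1 ≤ n →
    (∑ i ∈ Finset.range n, p n i = 1) ∧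
    (∀ i j, i ≤ j → j < n → p n j ≤ p n i) ∧
    (∀ i, i < n → 0 < p n i)

/-- The quantity `(C·p₁·(∑_{i=2}^n pᵢ²)^{1/2})⁻¹`. -/
noncomputable def coarseBound (p : ℕ → ℕ → ℝ) (n : ℕ) : ℝ :=
  (Cconst n (p n) * p n 0 * Real.sqrt (∑ i ∈ Finset.Ico 1 n, p n i ^ 2))⁻¹

namespace NU2

variable {n m : ℕ}

abbrev Cl (n : ℕ) := (Fin n × Bool) × (Fin n × Bool)

def vset (c : Cl n) : Finset (Fin n) := {c.1.1, c.2.1}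

def Proper (Φ : Fin m → Cl n) : Prop := ∀ j, (Φ j).1.1 ≠ (Φ j).2.1

def HasCycle (Φ : Fin m → Cl n) : Prop :=
  ∃ k : ℕ, 2 ≤ k ∧ ∃ g : ℕ → Fin m, ∃ v : ℕ → Fin n,
    (∀ i j, i < k → j < k → g i = g j → i = j) ∧
    (∀ i j, i < k → j < k → v i = v j → i = j) ∧
    (∀ i, i < k → vset (Φ (g i)) = {v i, v ((i + 1) % k)})

/-- A path structure of length `L` (clauses `g 0, …, g (L-1)`, vertices `v 0, …, v L`). -/
def IsPath (Φ : Fin m → Cl n) (S : Finset (Fin m)) (L : ℕ) : Prop :=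
  ∃ g : ℕ → Fin m, ∃ v : ℕ → Fin n,
    (∀ i, i < L → g i ∈ S) ∧
    (∀ i j, i < L → j < L → g i = g j → i = j) ∧
    (∀ i j, i ≤ L → j ≤ L → v i = v j → i = j) ∧
    (∀ i, i < L → vset (Φ (g i)) = {v i, v (i + 1)})

lemma path_le (Φ : Fin m → Cl n) (S : Finset (Fin m)) (L : ℕ) (h : IsPath Φ S L) : L ≤ m := by
  obtain ⟨g, v, -, hg, -, -⟩ := h
  have : Function.Injective (fun i : Fin L => g i) := by
    intro a b hab
    exact Fin.ext (hg a b a.isLt b.isLt hab)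
  simpa using Fintype.card_le_of_injective _ this

lemma mem_vset_iff {c : Cl n} {x : Fin n} : x ∈ vset c ↔ x = c.1.1 ∨ x = c.2.1 := by
  simp [vset]

lemma vset_pair {c : Cl n} {x : Fin n} (hc : c.1.1 ≠ c.2.1) (hx : x ∈ vset c) :
    ∃ w : Fin n, w ≠ x ∧ vset c = {x, w} := by
  rcases mem_vset_iff.1 hx with h | h
  · exact ⟨c.2.1, by rw [h]; exact fun hh => hc hh.symm, by rw [h]; rfl⟩
  · exact ⟨c.1.1, by rw [h]; exact hc, by rw [h, vset]; exact Finset.pair_comm _ _⟩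

lemma cycle_of_covered (Φ : Fin m → Cl n) (hΦ : Proper Φ) (S : Finset (Fin m))
    (hS : S.Nonempty)
    (hcov : ∀ j ∈ S, ∀ x ∈ vset (Φ j), ∃ j' ∈ S, j' ≠ j ∧ x ∈ vset (Φ j')) :
    HasCycle Φ := by
  obtain ⟨j₀, hj₀⟩ := hS
  have hm1 : 1 ≤ m := by
    rcases Nat.eq_zero_or_pos m with h | h
    · exact absurd j₀.isLt (by omega)
    · exact h
  have hP1 : IsPath Φ S 1 := by
    refine ⟨fun _ => j₀, fun i => if i = 0 then (Φ j₀).1.1 else (Φ j₀).2.1, ?_, ?_, ?_, ?_⟩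
    · intro i _; exact hj₀
    · intro i j hi hj _; omega
    · intro i j hi hj hv
      interval_cases i <;> interval_cases j <;> simp_all
      · exact absurd hv (hΦ j₀)
      · exact absurd hv.symm (hΦ j₀)
    · intro i hi
      interval_cases i
      simp [vset]
  set L := Nat.findGreatest (IsPath Φ S) m with hLdef
  have h1L : 1 ≤ L := Nat.le_findGreatest hm1 hP1
  have hPL : IsPath Φ S L := Nat.findGreatest_of_ne_zero rfl (by omega)
  have hmax : ¬ IsPath Φ S (L + 1) := by
    intro h
    exact Nat.findGreatest_is_greatest (by omega) (path_le Φ S _ h) h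
  obtain ⟨g, v, hgS, hginj, hvinj, hedge⟩ := hPL
  -- the endpoint `v L` lies in the last clause
  have hxlast : v L ∈ vset (Φ (g (L - 1))) := by
    rw [hedge (L - 1) (by omega)]
    have : L - 1 + 1 = L := by omega
    rw [this]
    simp
  obtain ⟨j', hj'S, hj'ne, hxj'⟩ := hcov (g (L - 1)) (hgS _ (by omega)) (v L) hxlast
  -- j' is not among the path clauses
  have hj'fresh : ∀ i, i < L → g i ≠ j' := by
    intro i hi hgi
    rcases Nat.lt_or_ge i (L - 1) with hi' | hi'
    · have := hedge i hi
      rw [hgi] at this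
      rw [this] at hxj'
      rcases Finset.mem_insert.1 hxj' with h | h
      · exact absurd (hvinj i L (by omega) le_rfl h.symm) (by omega)
      · have := Finset.mem_singleton.1 h
        exact absurd (hvinj (i+1) L (by omega) le_rfl this.symm) (by omega)
    · have : i = L - 1 := by omega
      rw [this] at hgi
      exact hj'ne hgi.symm
  -- the other endpoint of j'
  obtain ⟨w, hwx, hvsj'⟩ := vset_pair (hΦ j') hxj'
  by_cases hw : ∃ s, s ≤ L ∧ v s = w
  · -- close a cycle
    obtain ⟨s, hsL, hvs⟩ := hw
    have hsL' : s < L := by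
      rcases Nat.lt_or_ge s L with h | h
      · exact h
      · exfalso; have : s = L := by omega
        rw [this] at hvs; exact hwx hvs.symm
    refine ⟨L - s + 1, by omega, fun i => if i = L - s then j' else g (s + i),
      fun i => v (s + i), ?_, ?_, ?_⟩
    · intro i j hi hj hij
      dsimp only at hij
      by_cases h1 : i = L - s <;> by_cases h2 : j = L - s
      · omega
      · rw [if_pos h1, if_neg h2] at hij
        exact absurd hij.symm (hj'fresh (s + j) (by omega))
      · rw [if_neg h1, if_pos h2] at hij
        exact absurd hij (hj'fresh (s + i) (by omega))
      · rw [if_neg h1, if_neg h2] at hij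
        have := hginj (s + i) (s + j) (by omega) (by omega) hij
        omega
    · intro i j hi hj hij
      dsimp only at hij
      have := hvinj (s + i) (s + j) (by omega) (by omega) hij
      omega
    · intro i hi
      dsimp only
      by_cases h1 : i = L - s
      · rw [if_pos h1, hvsj', h1]
        have e1 : s + (L - s) = L := by omega
        have e2 : (L - s + 1) % (L - s + 1) = 0 := Nat.mod_self _
        rw [e1, e2, Nat.add_zero, hvs]
      · rw [if_neg h1]
        have hi' : i < L - s := by omega
        have e2 : (i + 1) % (L - s + 1) = i + 1 := Nat.mod_eq_of_lt (by omega)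
        rw [e2]
        have := hedge (s + i) (by omega)
        rw [this, Nat.add_assoc]
  · -- extend the path: contradiction with maximality
    exfalso
    apply hmax
    refine ⟨fun i => if i = L then j' else g i, fun i => if i = L + 1 then w else v i,
      ?_, ?_, ?_, ?_⟩
    · intro i hi
      dsimp only
      by_cases h : i = L
      · rw [if_pos h]; exact hj'S
      · rw [if_neg h]; exact hgS i (by omega)
    · intro i j hi hj hij
      dsimp only at hij
      by_cases h1 : i = L <;> by_cases h2 : j = L
      · omega
      · rw [if_pos h1, if_neg h2] at hij
        exact absurd hij.symm (hj'fresh j (by omega))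
      · rw [if_neg h1, if_pos h2] at hij
        exact absurd hij (hj'fresh i (by omega))
      · rw [if_neg h1, if_neg h2] at hij
        exact hginj i j (by omega) (by omega) hij
    · intro i j hi hj hij
      dsimp only at hij
      by_cases h1 : i = L + 1 <;> by_cases h2 : j = L + 1
      · omega
      · rw [if_pos h1, if_neg h2] at hij
        exact absurd ⟨j, by omega, hij.symm⟩ hw
      · rw [if_neg h1, if_pos h2] at hij
        exact absurd ⟨i, by omega, hij⟩ hw
      · rw [if_neg h1, if_neg h2] at hij
        exact hvinj i j (by omega) (by omega) hij
    · intro i hi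
      dsimp only
      by_cases h : i = L
      · rw [if_pos h, hvsj', h, if_pos rfl, if_neg (by omega : ¬ (L = L + 1))]
      · rw [if_neg h, if_neg (by omega : ¬ (i + 1 = L + 1)), if_neg (by omega : ¬ (i = L + 1))]
        exact hedge i (by omega)

end NU2
namespace NU2

variable {n m : ℕ}

lemma hall_of_no_cycle (Φ : Fin m → Cl n) (hΦ : Proper Φ) (hnc : ¬ HasCycle Φ)
    (S : Finset (Fin m)) : S.card ≤ (S.biUnion fun j => vset (Φ j)).card := by
  induction S using Finset.strongInduction with
  | _ S IH =>
    rcases S.eq_empty_or_nonempty with rfl | hSne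
    · simp
    by_cases hleaf : ∃ j ∈ S, ∃ x ∈ vset (Φ j), x ∉ (S.erase j).biUnion fun j' => vset (Φ j')
    · obtain ⟨j, hjS, x, hxv, hxout⟩ := hleaf
      have h1 : insert x ((S.erase j).biUnion fun j' => vset (Φ j')) ⊆
          S.biUnion fun j' => vset (Φ j') := by
        intro y hy
        rcases Finset.mem_insert.1 hy with rfl | hy
        · exact Finset.mem_biUnion.2 ⟨j, hjS, hxv⟩
        · exact Finset.biUnion_subset_biUnion_of_subset_left _ (Finset.erase_subset _ _) hy
      have h2 := IH (S.erase j) (Finset.erase_ssubset hjS)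
      calc S.card = (S.erase j).card + 1 := by
            rw [Finset.card_erase_of_mem hjS]
            have := Finset.card_pos.2 hSne
            omega
        _ ≤ ((S.erase j).biUnion fun j' => vset (Φ j')).card + 1 := by omega
        _ = (insert x ((S.erase j).biUnion fun j' => vset (Φ j'))).card :=
            (Finset.card_insert_of_notMem hxout).symm
        _ ≤ _ := Finset.card_le_card h1
    · exfalso
      push_neg at hleaf
      refine hnc (cycle_of_covered Φ hΦ S hSne ?_)
      intro j hjS x hxv
      have := hleaf j hjS x hxv
      obtain ⟨j', hj', hxj'⟩ := Finset.mem_biUnion.1 this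
      exact ⟨j', Finset.mem_of_mem_erase hj', Finset.ne_of_mem_erase hj', hxj'⟩

lemma sat_of_no_cycle (Φ : Fin m → Cl n) (hΦ : Proper Φ) (hnc : ¬ HasCycle Φ) : Sat2 Φ := by
  obtain ⟨f, hfinj, hf⟩ :=
    (Finset.all_card_le_biUnion_card_iff_exists_injective fun j => vset (Φ j)).1
      (hall_of_no_cycle Φ hΦ hnc)
  refine ⟨fun x => if h : ∃ j, f j = x then
    (if (Φ h.choose).1.1 = x then (Φ h.choose).1.2 else (Φ h.choose).2.2) else true, ?_⟩
  intro j
  have hex : ∃ j', f j' = f j := ⟨j, rfl⟩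
  have hch : hex.choose = j := hfinj hex.choose_spec
  rcases mem_vset_iff.1 (hf j) with h | h
  · left
    rw [← h]
    dsimp only
    rw [dif_pos hex, hch, if_pos h.symm]
  · right
    rw [← h]
    dsimp only
    rw [dif_pos hex, hch, if_neg]
    rw [h]
    exact hΦ j

end NU2
namespace NU2

variable {n m : ℕ} {p : ℕ → ℝ}

/-- Bundled hypotheses on the probability vector at a given `n ≥ 2`. -/
structure GoodP (n : ℕ) (p : ℕ → ℝ) : Prop where
  two_le : 2 ≤ n
  sum_one : ∑ i ∈ Finset.range n, p i = 1
  sorted : ∀ i j, i ≤ j → j < n → p j ≤ p i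
  pos : ∀ i, i < n → 0 < p i

lemma GoodP.sumsq_lt (h : GoodP n p) : ∑ i ∈ Finset.range n, p i ^ 2 < 1 := by
  have h2n := h.two_le
  have h0 : ∀ i ∈ Finset.range n, 0 ≤ p i := fun i hi =>
    (h.pos i (Finset.mem_range.1 hi)).le
  have hb : ∑ i ∈ Finset.range n, p i ^ 2 ≤ p 0 * ∑ i ∈ Finset.range n, p i := by
    rw [Finset.mul_sum]
    refine Finset.sum_le_sum fun i hi => ?_
    have hle := h.sorted 0 i (Nat.zero_le i) (Finset.mem_range.1 hi)
    calc p i ^ 2 = p i * p i := sq (p i)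
      _ ≤ p 0 * p i := mul_le_mul_of_nonneg_right hle (h0 i hi)
  rw [h.sum_one, mul_one] at hb
  have hp1 : 0 < p 1 := h.pos 1 (by omega)
  have hsub : p 0 + p 1 ≤ ∑ i ∈ Finset.range n, p i := by
    have hs : ({0, 1} : Finset ℕ) ⊆ Finset.range n := by
      intro i hi
      simp only [Finset.mem_insert, Finset.mem_singleton] at hi
      rcases hi with rfl | rfl <;> simp only [Finset.mem_range] <;> omega
    calc p 0 + p 1 = ∑ i ∈ ({0, 1} : Finset ℕ), p i := by simp
      _ ≤ _ := Finset.sum_le_sum_of_subset_of_nonneg hs fun i hi _ => h0 i hi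
  rw [h.sum_one] at hsub
  linarith

lemma GoodP.one_sub_pos (h : GoodP n p) : 0 < 1 - ∑ i ∈ Finset.range n, p i ^ 2 := by
  linarith [h.sumsq_lt]

lemma GoodP.Cpos (h : GoodP n p) : 0 < Cconst n p := inv_pos.2 h.one_sub_pos

lemma GoodP.p_nonneg (h : GoodP n p) (i : Fin n) : 0 ≤ p i := (h.pos i i.isLt).le

lemma clauseProb2_nonneg (h : GoodP n p) (c : Cl n) : 0 ≤ clauseProb2 n p c := by
  unfold clauseProb2
  split
  · have h1 := h.p_nonneg c.1.1
    have h2 := h.p_nonneg c.2.1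
    have hC := h.Cpos
    unfold Cconst at hC
    positivity
  · exact le_refl 0

lemma formulaProb2_nonneg (h : GoodP n p) (Φ : Fin m → Cl n) : 0 ≤ formulaProb2 n m p Φ :=
  Finset.prod_nonneg fun j _ => clauseProb2_nonneg h _

lemma sum_clauseProb2 (h : GoodP n p) : ∑ c : Cl n, clauseProb2 n p c = 1 := by
  set A : ℝ := (1 - ∑ i ∈ Finset.range n, p i ^ 2)⁻¹ / 4 with hA
  set g : Fin n → Fin n → ℝ := fun i j => if i ≠ j then A * p i * p j else 0 with hg
  have hbool : ∀ h : Fin n → ℝ, ∑ y : Fin n × Bool, h y.1 = 2 * ∑ j, h j := by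
    intro h
    rw [Fintype.sum_prod_type]
    have hb : ∀ i : Fin n, ∑ _b : Bool, h i = 2 * h i := by
      intro i; rw [Fintype.sum_bool]; ring
    rw [Finset.sum_congr rfl fun i _ => hb i, ← Finset.mul_sum]
  have key : ∑ c : Cl n, clauseProb2 n p c = 4 * ∑ i, ∑ j, g i j := by
    calc ∑ c : Cl n, clauseProb2 n p c = ∑ x : Fin n × Bool, ∑ y : Fin n × Bool, g x.1 y.1 := by
          rw [Fintype.sum_prod_type]
          exact Finset.sum_congr rfl fun x _ => Finset.sum_congr rfl fun y _ => rfl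
      _ = ∑ x : Fin n × Bool, 2 * ∑ j, g x.1 j :=
          Finset.sum_congr rfl fun x _ => hbool (g x.1)
      _ = 2 * ∑ i, 2 * ∑ j, g i j := hbool (fun i => 2 * ∑ j, g i j)
      _ = 4 * ∑ i, ∑ j, g i j := by
          rw [Finset.mul_sum, Finset.mul_sum]
          exact Finset.sum_congr rfl fun i _ => by ring
  have hsplit : ∀ i : Fin n, ∑ j, g i j
      = (∑ j : Fin n, A * p (i : ℕ) * p (j : ℕ)) - A * p (i : ℕ) * p (i : ℕ) := by
    intro i
    have : ∀ j : Fin n, g i j = A * p i * p j - (if i = j then A * p i * p j else 0) := by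
      intro j
      by_cases hij : i = j <;> simp [hg, hij]
    rw [Finset.sum_congr rfl fun j _ => this j, Finset.sum_sub_distrib, Finset.sum_ite_eq]
    simp
  have hsum1 : ∑ i : Fin n, p (i : ℕ) = 1 := by
    rw [Fin.sum_univ_eq_sum_range]; exact h.sum_one
  have hsumsq : ∑ i : Fin n, p (i : ℕ) * p (i : ℕ)
      = ∑ i ∈ Finset.range n, p i ^ 2 := by
    rw [Fin.sum_univ_eq_sum_range (fun i => p i * p i)]
    exact Finset.sum_congr rfl fun i _ => (sq (p i)).symm
  rw [key, Finset.sum_congr rfl fun i _ => hsplit i, Finset.sum_sub_distrib]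
  have e1 : ∑ i : Fin n, ∑ j : Fin n, A * p i * p j = A := by
    have : ∀ i : Fin n, ∑ j : Fin n, A * p (i : ℕ) * p (j : ℕ) = A * p (i : ℕ) := by
      intro i
      rw [← Finset.mul_sum, hsum1, mul_one]
    rw [Finset.sum_congr rfl fun i _ => this i, ← Finset.mul_sum, hsum1, mul_one]
  have e2 : ∑ i : Fin n, A * p (i : ℕ) * p (i : ℕ)
      = A * ∑ i ∈ Finset.range n, p i ^ 2 := by
    rw [← hsumsq, Finset.mul_sum]
    exact Finset.sum_congr rfl fun i _ => by ring
  rw [e1, e2, hA]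
  have hne := ne_of_gt h.one_sub_pos
  field_simp

end NU2
namespace NU2

variable {n m : ℕ} {p : ℕ → ℝ}

lemma sum_formulaProb2 (h : GoodP n p) :
    ∑ Φ : Fin m → Cl n, formulaProb2 n m p Φ = 1 := by
  have : ∑ Φ ∈ Fintype.piFinset (fun _ : Fin m => (Finset.univ : Finset (Cl n))),
      ∏ j, clauseProb2 n p (Φ j) = ∏ _j : Fin m, ∑ c : Cl n, clauseProb2 n p c :=
    (Finset.prod_univ_sum _ _).symm
  rw [Fintype.piFinset_univ] at this
  rw [show (∑ Φ : Fin m → Cl n, formulaProb2 n m p Φ)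
    = ∑ Φ : Fin m → Cl n, ∏ j, clauseProb2 n p (Φ j) from rfl, this]
  rw [Finset.prod_congr rfl fun j _ => sum_clauseProb2 h]
  simp

lemma probSat_add_probUnsat (h : GoodP n p) :
    probSat2 n m p + probUnsat2 n m p = 1 := by
  rw [probSat2, probUnsat2, ← Finset.sum_add_distrib]
  rw [← sum_formulaProb2 (m := m) h]
  refine Finset.sum_congr rfl fun Φ _ => ?_
  by_cases hs : Sat2 Φ <;> simp [hs]

lemma probUnsat_nonneg (h : GoodP n p) : 0 ≤ probUnsat2 n m p := by
  refine Finset.sum_nonneg fun Φ _ => ?_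
  split
  · exact formulaProb2_nonneg h Φ
  · exact le_refl 0

end NU2
namespace NU2

variable {n m : ℕ} {p : ℕ → ℝ}

/-- Cyclic successor on `Fin k`. -/
def finRot {k : ℕ} (t : Fin k) : Fin k :=
  ⟨((t : ℕ) + 1) % k, Nat.mod_lt _ (Nat.lt_of_le_of_lt (Nat.zero_le _) t.isLt)⟩

lemma val_succ_mod {k : ℕ} (c : ℕ) (hc : c < k) :
    (c + 1) % k = if c + 1 = k then 0 else c + 1 := by
  split
  · rename_i h; rw [h, Nat.mod_self]
  · exact Nat.mod_eq_of_lt (by omega)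

lemma fin_ne_rot {k : ℕ} (hk : 2 ≤ k) (t : Fin k) : t ≠ finRot t := by
  intro h
  have hv := congrArg Fin.val h
  rw [finRot] at hv
  dsimp only at hv
  rw [val_succ_mod _ t.isLt] at hv
  have := t.isLt
  split at hv <;> omega

lemma finRot_bijective {k : ℕ} : Function.Bijective (finRot (k := k)) := by
  rw [Fintype.bijective_iff_injective_and_card]
  refine ⟨fun a b hab => ?_, rfl⟩
  have hv := congrArg Fin.val hab
  rw [finRot, finRot] at hv
  dsimp only at hv
  rw [val_succ_mod _ a.isLt, val_succ_mod _ b.isLt] at hv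
  have ha := a.isLt
  have hb := b.isLt
  apply Fin.ext
  split at hv <;> split at hv <;> omega

/-- Union bound for sums over a covered finset. -/
lemma sum_le_sum_of_cover {α ι : Type*} [Fintype ι] (A : Finset α)
    (B : ι → Finset α) (f : α → ℝ) (hf : ∀ a, 0 ≤ f a)
    (hcov : ∀ a ∈ A, ∃ i, a ∈ B i) :
    ∑ a ∈ A, f a ≤ ∑ i : ι, ∑ a ∈ B i, f a := by
  classical
  have hbi : ∀ s : Finset ι, ∑ a ∈ s.biUnion B, f a ≤ ∑ i ∈ s, ∑ a ∈ B i, f a := by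
    intro s
    induction s using Finset.induction_on with
    | empty => simp
    | insert a s ha ih =>
      rw [Finset.biUnion_insert, Finset.sum_insert ha]
      have h1 : ∑ x ∈ B a ∪ s.biUnion B, f x ≤ ∑ x ∈ B a, f x + ∑ x ∈ s.biUnion B, f x := by
        have := Finset.sum_union_inter (s₁ := B a) (s₂ := s.biUnion B) (f := f)
        have h0 : 0 ≤ ∑ x ∈ B a ∩ s.biUnion B, f x := Finset.sum_nonneg fun x _ => hf x
        linarith
      exact h1.trans (by linarith)
  refine le_trans ?_ (hbi Finset.univ)
  refine Finset.sum_le_sum_of_subset_of_nonneg ?_ fun a _ _ => hf a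
  intro a ha
  obtain ⟨i, hi⟩ := hcov a ha
  exact Finset.mem_biUnion.2 ⟨i, Finset.mem_univ i, hi⟩

/-- Per-clause pattern bound. -/
lemma clause_pattern_bound (h : GoodP n p) {a b : Fin n} (hab : a ≠ b) :
    ∑ c : Cl n, (if vset c = ({a, b} : Finset (Fin n)) then clauseProb2 n p c else 0)
      ≤ 4 * Cconst n p * (p a * p b) := by
  have hCpos := h.Cpos
  have hpa := h.p_nonneg a
  have hpb := h.p_nonneg b
  have hterm : ∀ c : Cl n, (if vset c = ({a, b} : Finset (Fin n)) then clauseProb2 n p c else 0)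
      ≤ (if vset c = ({a, b} : Finset (Fin n)) then Cconst n p / 4 * (p a * p b) else 0) := by
    intro c
    split
    · rename_i hv
      by_cases hc : c.1.1 ≠ c.2.1
      · rw [clauseProb2, if_pos hc, ← Cconst]
        have h1 : c.1.1 ∈ ({a, b} : Finset (Fin n)) := by
          rw [← hv]; exact mem_vset_iff.2 (Or.inl rfl)
        have h2 : c.2.1 ∈ ({a, b} : Finset (Fin n)) := by
          rw [← hv]; exact mem_vset_iff.2 (Or.inr rfl)
        simp only [Finset.mem_insert, Finset.mem_singleton] at h1 h2
        rcases h1 with e1 | e1 <;> rcases h2 with e2 | e2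
        · exact absurd (e1.trans e2.symm) hc
        · rw [e1, e2]; exact le_of_eq (by ring)
        · rw [e1, e2]; exact le_of_eq (by ring)
        · exact absurd (e1.trans e2.symm) hc
      · rw [clauseProb2, if_neg hc]
        positivity
    · exact le_refl 0
  refine (Finset.sum_le_sum fun c _ => hterm c).trans ?_
  rw [← Finset.sum_filter]
  rw [Finset.sum_const]
  have hcard : (Finset.univ.filter
      fun c : Cl n => vset c = ({a, b} : Finset (Fin n))).card ≤ 16 := by
    have hsub : (Finset.univ.filter fun c : Cl n => vset c = ({a, b} : Finset (Fin n)))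
        ⊆ (({a, b} : Finset (Fin n)) ×ˢ (Finset.univ : Finset Bool)) ×ˢ
          (({a, b} : Finset (Fin n)) ×ˢ (Finset.univ : Finset Bool)) := by
      intro c hc
      have hv := (Finset.mem_filter.1 hc).2
      have h1 : c.1.1 ∈ ({a, b} : Finset (Fin n)) := by
        rw [← hv]; exact mem_vset_iff.2 (Or.inl rfl)
      have h2 : c.2.1 ∈ ({a, b} : Finset (Fin n)) := by
        rw [← hv]; exact mem_vset_iff.2 (Or.inr rfl)
      refine Finset.mem_product.2 ⟨Finset.mem_product.2 ⟨h1, Finset.mem_univ _⟩,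
        Finset.mem_product.2 ⟨h2, Finset.mem_univ _⟩⟩
    refine (Finset.card_le_card hsub).trans ?_
    simp [Finset.card_pair hab]
  calc (Finset.univ.filter fun c : Cl n => vset c = ({a, b} : Finset (Fin n))).card
        • (Cconst n p / 4 * (p a * p b))
      = ((Finset.univ.filter fun c : Cl n => vset c = ({a, b} : Finset (Fin n))).card : ℝ)
        * (Cconst n p / 4 * (p a * p b)) := nsmul_eq_mul _ _
    _ ≤ 16 * (Cconst n p / 4 * (p a * p b)) := by
        refine mul_le_mul_of_nonneg_right ?_ (by positivity)
        exact_mod_cast hcard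
    _ = 4 * Cconst n p * (p a * p b) := by ring

end NU2
namespace NU2

variable {n m : ℕ} {p : ℕ → ℝ}

lemma pattern_sum_le (h : GoodP n p) {k : ℕ} (hk : 2 ≤ k)
    (g : Fin k → Fin m) (hg : Function.Injective g)
    (v : Fin k → Fin n) (hv : Function.Injective v) :
    ∑ Φ : Fin m → Cl n, (if ∀ t : Fin k, vset (Φ (g t)) = {v t, v (finRot t)}
      then formulaProb2 n m p Φ else 0)
    ≤ (4 * Cconst n p) ^ k * ∏ t : Fin k, p (v t) ^ 2 := by
  set hh : Fin m → Cl n → ℝ := fun j c =>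
    if ∀ t, g t = j → vset c = {v t, v (finRot t)} then clauseProb2 n p c else 0 with hhdef
  have hpoint : ∀ Φ : Fin m → Cl n,
      (if ∀ t : Fin k, vset (Φ (g t)) = {v t, v (finRot t)} then formulaProb2 n m p Φ else 0)
      = ∏ j, hh j (Φ j) := by
    intro Φ
    by_cases hpat : ∀ t : Fin k, vset (Φ (g t)) = {v t, v (finRot t)}
    · rw [if_pos hpat, formulaProb2]
      refine Finset.prod_congr rfl fun j _ => ?_
      rw [hhdef]
      dsimp only
      rw [if_pos]
      intro t ht
      rw [← ht]
      exact hpat t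
    · rw [if_neg hpat]
      push_neg at hpat
      obtain ⟨t₀, ht₀⟩ := hpat
      symm
      refine Finset.prod_eq_zero (Finset.mem_univ (g t₀)) ?_
      rw [hhdef]
      dsimp only
      rw [if_neg]
      intro hall
      exact ht₀ (hall t₀ rfl)
  rw [Finset.sum_congr rfl fun Φ _ => hpoint Φ]
  have hsum : ∑ Φ : Fin m → Cl n, ∏ j, hh j (Φ j) = ∏ j, ∑ c : Cl n, hh j c := by
    rw [← Fintype.piFinset_univ (α := Fin m)]
    exact (Finset.prod_univ_sum _ _).symm
  rw [hsum]
  have hfac_nonneg : ∀ j, 0 ≤ ∑ c : Cl n, hh j c := by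
    intro j
    refine Finset.sum_nonneg fun c _ => ?_
    rw [hhdef]
    dsimp only
    split
    · exact clauseProb2_nonneg h c
    · exact le_refl 0
  have hoff : ∀ j ∈ Finset.univ, j ∉ Finset.univ.image g → ∑ c : Cl n, hh j c = 1 := by
    intro j _ hj
    have : ∀ c : Cl n, hh j c = clauseProb2 n p c := by
      intro c
      rw [hhdef]
      dsimp only
      rw [if_pos]
      intro t ht
      exact absurd (Finset.mem_image.2 ⟨t, Finset.mem_univ t, ht⟩) hj
    rw [Finset.sum_congr rfl fun c _ => this c]
    exact sum_clauseProb2 h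
  rw [← Finset.prod_subset (Finset.subset_univ (Finset.univ.image g)) hoff]
  rw [Finset.prod_image fun t _ s _ hts => hg hts]
  have hstep : ∀ t : Fin k, ∑ c : Cl n, hh (g t) c
      ≤ 4 * Cconst n p * (p (v t) * p (v (finRot t))) := by
    intro t
    have hcond : ∀ c : Cl n, hh (g t) c
        = (if vset c = ({v t, v (finRot t)} : Finset (Fin n)) then clauseProb2 n p c else 0) := by
      intro c
      rw [hhdef]
      dsimp only
      congr 1
      apply propext
      constructor
      · intro hall
        exact hall t rfl
      · intro hc s hs
        rw [hg hs]
        exact hc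
    rw [Finset.sum_congr rfl fun c _ => hcond c]
    exact clause_pattern_bound h fun e => fin_ne_rot hk t (hv e)
  refine (Finset.prod_le_prod (fun t _ => hfac_nonneg (g t)) fun t _ => hstep t).trans ?_
  refine le_of_eq ?_
  rw [Finset.prod_mul_distrib, Finset.prod_const, Finset.card_univ, Fintype.card_fin]
  congr 1
  rw [Finset.prod_mul_distrib]
  have : ∏ t : Fin k, p (v (finRot t)) = ∏ t : Fin k, p (v t) :=
    Equiv.prod_comp (Equiv.ofBijective finRot finRot_bijective) fun t => p (v t)
  rw [this, ← Finset.prod_mul_distrib]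
  exact Finset.prod_congr rfl fun t _ => (sq (p (v t))).symm

lemma filter_ne_zero_sum (h : GoodP n p) :
    ∑ i ∈ Finset.univ.filter (fun i : Fin n => (i : ℕ) ≠ 0), p (i : ℕ) ^ 2
      = ∑ i ∈ Finset.Ico 1 n, p i ^ 2 := by
  rw [Finset.sum_filter]
  rw [Fin.sum_univ_eq_sum_range (fun j => if j ≠ 0 then p j ^ 2 else 0)]
  rw [← Finset.sum_filter]
  congr 1
  ext i
  simp only [Finset.mem_filter, Finset.mem_range, Finset.mem_Ico]
  omega

lemma sum_over_v_le (h : GoodP n p) {k : ℕ} (hk : 2 ≤ k) :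
    ∑ v ∈ Finset.univ.filter (fun v : Fin k → Fin n => Function.Injective v),
      ∏ t : Fin k, p (v t) ^ 2
    ≤ (k : ℝ) * ((∑ i ∈ Finset.range n, p i ^ 2) *
        (∑ i ∈ Finset.Ico 1 n, p i ^ 2) ^ (k - 1)) := by
  have hn2 := h.two_le
  set B : Fin k → Finset (Fin k → Fin n) := fun t₀ =>
    Fintype.piFinset (fun t => if t = t₀ then Finset.univ
      else Finset.univ.filter fun i : Fin n => (i : ℕ) ≠ 0) with hB
  have hcov : ∀ v ∈ Finset.univ.filter (fun v : Fin k → Fin n => Function.Injective v),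
      ∃ t₀, v ∈ B t₀ := by
    intro v hv
    have hvinj := (Finset.mem_filter.1 hv).2
    by_cases hz : ∃ t, (v t : ℕ) = 0
    · refine ⟨hz.choose, ?_⟩
      rw [hB]
      rw [Fintype.mem_piFinset]
      intro t
      by_cases ht : t = hz.choose
      · rw [if_pos ht]; exact Finset.mem_univ _
      · rw [if_neg ht]
        refine Finset.mem_filter.2 ⟨Finset.mem_univ _, fun h0 => ?_⟩
        exact ht (hvinj (Fin.ext (h0.trans hz.choose_spec.symm)))
    · push_neg at hz
      refine ⟨⟨0, by omega⟩, ?_⟩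
      rw [hB, Fintype.mem_piFinset]
      intro t
      split
      · exact Finset.mem_univ _
      · exact Finset.mem_filter.2 ⟨Finset.mem_univ _, hz t⟩
  refine (sum_le_sum_of_cover _ B _ (fun v => Finset.prod_nonneg fun t _ => sq_nonneg _)
    hcov).trans ?_
  have hper : ∀ t₀ : Fin k, ∑ v ∈ B t₀, ∏ t : Fin k, p (v t) ^ 2
      = (∑ i ∈ Finset.range n, p i ^ 2) * (∑ i ∈ Finset.Ico 1 n, p i ^ 2) ^ (k - 1) := by
    intro t₀
    rw [hB]
    dsimp only
    rw [← Finset.prod_univ_sum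
      (fun t : Fin k => if t = t₀ then (Finset.univ : Finset (Fin n))
        else Finset.univ.filter fun i : Fin n => (i : ℕ) ≠ 0)
      (fun _ j => p (j : ℕ) ^ 2)]
    have hfac : ∀ t : Fin k, (∑ i ∈ (if t = t₀ then Finset.univ
        else Finset.univ.filter fun i : Fin n => (i : ℕ) ≠ 0), p (i : ℕ) ^ 2)
        = if t = t₀ then (∑ i ∈ Finset.range n, p i ^ 2)
          else (∑ i ∈ Finset.Ico 1 n, p i ^ 2) := by
      intro t
      split
      · exact Fin.sum_univ_eq_sum_range (fun j => p j ^ 2) n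
      · exact filter_ne_zero_sum h
    rw [Finset.prod_congr rfl fun t _ => hfac t]
    rw [← Finset.mul_prod_erase Finset.univ _ (Finset.mem_univ t₀), if_pos rfl]
    congr 1
    rw [Finset.prod_congr rfl fun t ht => if_neg (Finset.ne_of_mem_erase ht)]
    rw [Finset.prod_const, Finset.card_erase_of_mem (Finset.mem_univ t₀),
      Finset.card_univ, Fintype.card_fin]
  rw [Finset.sum_congr rfl fun t₀ _ => hper t₀, Finset.sum_const, Finset.card_univ,
    Fintype.card_fin, nsmul_eq_mul]

end NU2
namespace NU2

variable {n : ℕ} {p : ℕ → ℝ}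

lemma probUnsat_le_sum (h : GoodP n p) (m : ℕ) :
    probUnsat2 n m p ≤ ∑ k ∈ Finset.Icc 2 m,
      (m : ℝ) ^ k * ((4 * Cconst n p) ^ k *
        ((k : ℝ) * ((∑ i ∈ Finset.range n, p i ^ 2) *
          (∑ i ∈ Finset.Ico 1 n, p i ^ 2) ^ (k - 1)))) := by
  classical
  set F := formulaProb2 n m p with hF
  set pat : ∀ k : ℕ, (Fin k → Fin m) → (Fin k → Fin n) → (Fin m → Cl n) → Prop :=
    fun k g v Φ => ∀ t : Fin k, vset (Φ (g t)) = {v t, v (finRot t)} with hpat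
  have hFnn : ∀ Φ, 0 ≤ F Φ := fun Φ => formulaProb2_nonneg h Φ
  have hterm_nn : ∀ (k : ℕ) (g : Fin k → Fin m) (v : Fin k → Fin n) (Φ),
      0 ≤ (if pat k g v Φ then F Φ else 0) := by
    intro k g v Φ
    split
    · exact hFnn Φ
    · exact le_refl 0
  -- Step A : pointwise union bound
  have hA : probUnsat2 n m p ≤ ∑ k ∈ Finset.Icc 2 m,
      ∑ g ∈ Finset.univ.filter (fun g : Fin k → Fin m => Function.Injective g),
        ∑ v ∈ Finset.univ.filter (fun v : Fin k → Fin n => Function.Injective v),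
          ∑ Φ : Fin m → Cl n, (if pat k g v Φ then F Φ else 0) := by
    have hswap : ∑ k ∈ Finset.Icc 2 m,
        ∑ g ∈ Finset.univ.filter (fun g : Fin k → Fin m => Function.Injective g),
          ∑ v ∈ Finset.univ.filter (fun v : Fin k → Fin n => Function.Injective v),
            ∑ Φ : Fin m → Cl n, (if pat k g v Φ then F Φ else 0)
        = ∑ Φ : Fin m → Cl n, ∑ k ∈ Finset.Icc 2 m,
          ∑ g ∈ Finset.univ.filter (fun g : Fin k → Fin m => Function.Injective g),
            ∑ v ∈ Finset.univ.filter (fun v : Fin k → Fin n => Function.Injective v),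
              (if pat k g v Φ then F Φ else 0) := by
      refine Eq.trans (Finset.sum_congr rfl fun k _ => ?_) Finset.sum_comm
      exact Eq.trans (Finset.sum_congr rfl fun g _ => Finset.sum_comm) Finset.sum_comm
    rw [hswap, probUnsat2]
    refine Finset.sum_le_sum fun Φ _ => ?_
    by_cases hs : Sat2 Φ
    · rw [if_neg (fun hh => hh hs)]
      exact Finset.sum_nonneg fun k _ => Finset.sum_nonneg fun g _ =>
        Finset.sum_nonneg fun v _ => hterm_nn k g v Φ
    · rw [if_pos hs]
      by_cases hproper : Proper Φ
      · have hcyc : HasCycle Φ := by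
          by_contra hnc
          exact hs (sat_of_no_cycle Φ hproper hnc)
        obtain ⟨k, hk2, g, v, hginj, hvinj, hedge⟩ := hcyc
        set gF : Fin k → Fin m := fun t => g t.val with hgF
        set vF : Fin k → Fin n := fun t => v t.val with hvF
        have hgFinj : Function.Injective gF := fun a b hab =>
          Fin.ext (hginj a.val b.val a.isLt b.isLt hab)
        have hvFinj : Function.Injective vF := fun a b hab =>
          Fin.ext (hvinj a.val b.val a.isLt b.isLt hab)
        have hkm : k ≤ m := by
          have := Fintype.card_le_of_injective gF hgFinj
          simpa using this
        have hpatF : pat k gF vF Φ := fun t => hedge t.val t.isLt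
        have h1 : F Φ ≤ ∑ v' ∈ Finset.univ.filter
            (fun v' : Fin k → Fin n => Function.Injective v'),
            (if pat k gF v' Φ then F Φ else 0) := by
          have := Finset.single_le_sum (f := fun v' : Fin k → Fin n =>
              (if pat k gF v' Φ then F Φ else 0))
            (fun v' _ => hterm_nn k gF v' Φ)
            (Finset.mem_filter.2 ⟨Finset.mem_univ vF, hvFinj⟩)
          rwa [if_pos hpatF] at this
        have h2 : F Φ ≤ ∑ g' ∈ Finset.univ.filter
            (fun g' : Fin k → Fin m => Function.Injective g'),
            ∑ v' ∈ Finset.univ.filter (fun v' : Fin k → Fin n => Function.Injective v'),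
              (if pat k g' v' Φ then F Φ else 0) := by
          refine h1.trans ?_
          exact Finset.single_le_sum (f := fun g' : Fin k → Fin m =>
              ∑ v' ∈ Finset.univ.filter (fun v' : Fin k → Fin n => Function.Injective v'),
                (if pat k g' v' Φ then F Φ else 0))
            (fun g' _ => Finset.sum_nonneg fun v' _ => hterm_nn k g' v' Φ)
            (Finset.mem_filter.2 ⟨Finset.mem_univ gF, hgFinj⟩)
        refine h2.trans ?_
        exact Finset.single_le_sum (f := fun k' : ℕ =>
            ∑ g' ∈ Finset.univ.filter (fun g' : Fin k' → Fin m => Function.Injective g'),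
              ∑ v' ∈ Finset.univ.filter (fun v' : Fin k' → Fin n => Function.Injective v'),
                (if pat k' g' v' Φ then F Φ else 0))
          (fun k' _ => Finset.sum_nonneg fun g' _ => Finset.sum_nonneg fun v' _ =>
            hterm_nn k' g' v' Φ)
          (Finset.mem_Icc.2 ⟨hk2, hkm⟩)
      · -- a degenerate clause has probability zero
        rw [Proper] at hproper
        push_neg at hproper
        obtain ⟨j, hj⟩ := hproper
        have hF0 : formulaProb2 n m p Φ = 0 := by
          rw [formulaProb2]
          refine Finset.prod_eq_zero (Finset.mem_univ j) ?_
          rw [clauseProb2, if_neg (not_not.2 hj)]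
        rw [hF0]
        exact Finset.sum_nonneg fun k _ => Finset.sum_nonneg fun g _ =>
          Finset.sum_nonneg fun v _ => hterm_nn k g v Φ
  refine hA.trans (Finset.sum_le_sum fun k hk => ?_)
  have hk2 : 2 ≤ k := (Finset.mem_Icc.1 hk).1
  have hCpos := h.Cpos
  have hTall : (0:ℝ) ≤ ∑ i ∈ Finset.range n, p i ^ 2 :=
    Finset.sum_nonneg fun i _ => sq_nonneg _
  have hS : (0:ℝ) ≤ ∑ i ∈ Finset.Ico 1 n, p i ^ 2 :=
    Finset.sum_nonneg fun i _ => sq_nonneg _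
  have hinner : ∀ g : Fin k → Fin m, Function.Injective g →
      ∑ v ∈ Finset.univ.filter (fun v : Fin k → Fin n => Function.Injective v),
        ∑ Φ : Fin m → Cl n, (if pat k g v Φ then F Φ else 0)
      ≤ (4 * Cconst n p) ^ k *
        ((k : ℝ) * ((∑ i ∈ Finset.range n, p i ^ 2) *
          (∑ i ∈ Finset.Ico 1 n, p i ^ 2) ^ (k - 1))) := by
    intro g hg
    have step1 : ∑ v ∈ Finset.univ.filter (fun v : Fin k → Fin n => Function.Injective v),
        ∑ Φ : Fin m → Cl n, (if pat k g v Φ then F Φ else 0)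
        ≤ ∑ v ∈ Finset.univ.filter (fun v : Fin k → Fin n => Function.Injective v),
          (4 * Cconst n p) ^ k * ∏ t : Fin k, p (v t) ^ 2 := by
      refine Finset.sum_le_sum fun v hv => ?_
      exact pattern_sum_le h hk2 g hg v (Finset.mem_filter.1 hv).2
    refine step1.trans ?_
    rw [← Finset.mul_sum]
    refine mul_le_mul_of_nonneg_left ?_ (by positivity)
    exact sum_over_v_le h hk2
  calc ∑ g ∈ Finset.univ.filter (fun g : Fin k → Fin m => Function.Injective g),
        ∑ v ∈ Finset.univ.filter (fun v : Fin k → Fin n => Function.Injective v),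
          ∑ Φ : Fin m → Cl n, (if pat k g v Φ then F Φ else 0)
      ≤ ∑ _g ∈ Finset.univ.filter (fun g : Fin k → Fin m => Function.Injective g),
        (4 * Cconst n p) ^ k *
          ((k : ℝ) * ((∑ i ∈ Finset.range n, p i ^ 2) *
            (∑ i ∈ Finset.Ico 1 n, p i ^ 2) ^ (k - 1))) := by
        refine Finset.sum_le_sum fun g hg => hinner g (Finset.mem_filter.1 hg).2
    _ ≤ ∑ _g : Fin k → Fin m, (4 * Cconst n p) ^ k *
          ((k : ℝ) * ((∑ i ∈ Finset.range n, p i ^ 2) *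
            (∑ i ∈ Finset.Ico 1 n, p i ^ 2) ^ (k - 1))) := by
        refine Finset.sum_le_sum_of_subset_of_nonneg (Finset.subset_univ _)
          fun g _ _ => by positivity
    _ = (m : ℝ) ^ k * ((4 * Cconst n p) ^ k *
          ((k : ℝ) * ((∑ i ∈ Finset.range n, p i ^ 2) *
            (∑ i ∈ Finset.Ico 1 n, p i ^ 2) ^ (k - 1)))) := by
        rw [Finset.sum_const, Finset.card_univ, nsmul_eq_mul]
        congr 1
        rw [Fintype.card_fun]
        push_cast
        simp
  
end NU2
namespace NU2

variable {n : ℕ} {p : ℕ → ℝ}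

lemma nat_le_two_pow_sub (k : ℕ) (hk : 2 ≤ k) : k ≤ 2 * 2 ^ (k - 2) := by
  induction k with
  | zero => omega
  | succ k ih =>
    rcases Nat.lt_or_ge k 2 with h | h
    · interval_cases k <;> simp_all
    · have h1 := ih h
      have h2 : k + 1 - 2 = (k - 2) + 1 := by omega
      rw [h2, pow_succ]
      have : 1 ≤ 2 ^ (k - 2) := Nat.one_le_two_pow
      omega

lemma geo_half (N : ℕ) : ∑ j ∈ Finset.range N, (1/2 : ℝ) ^ j ≤ 2 := by
  have geo : ∀ N : ℕ, ∑ j ∈ Finset.range N, (1/2 : ℝ) ^ j = 2 - 2 * (1/2) ^ N := by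
    intro N
    induction N with
    | zero => simp
    | succ N ih => rw [Finset.sum_range_succ, ih]; ring
  rw [geo]
  have : (0:ℝ) ≤ (1/2 : ℝ) ^ N := by positivity
  linarith

lemma probUnsat_le_quad (h : GoodP n p) (m : ℕ) (K : ℝ) (hK1 : 1 ≤ K)
    (hK : (∑ i ∈ Finset.range n, p i ^ 2) ≤ K * p 0 ^ 2)
    (hu : 4 * Real.sqrt K *
        ((m : ℝ) * (Cconst n p * p 0 * Real.sqrt (∑ i ∈ Finset.Ico 1 n, p i ^ 2))) ≤ 1/4) :
    probUnsat2 n m p ≤ 256 * K *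
      ((m : ℝ) * (Cconst n p * p 0 * Real.sqrt (∑ i ∈ Finset.Ico 1 n, p i ^ 2))) ^ 2 := by
  have hn2 := h.two_le
  set Tall : ℝ := ∑ i ∈ Finset.range n, p i ^ 2 with hTall
  set S : ℝ := ∑ i ∈ Finset.Ico 1 n, p i ^ 2 with hSdef
  set C : ℝ := Cconst n p with hC
  set σ : ℝ := Real.sqrt S with hσ
  set u : ℝ := 4 * Real.sqrt K * ((m : ℝ) * (C * p 0 * σ)) with hudef
  have hS0 : (0:ℝ) ≤ S := Finset.sum_nonneg fun i _ => sq_nonneg _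
  have hTall0 : (0:ℝ) ≤ Tall := Finset.sum_nonneg fun i _ => sq_nonneg _
  have hσ0 : 0 ≤ σ := Real.sqrt_nonneg _
  have hSσ : S = σ ^ 2 := (Real.sq_sqrt hS0).symm
  have hK0 : (0:ℝ) ≤ K := le_trans zero_le_one hK1
  have hp0 : 0 < p 0 := h.pos 0 (by omega)
  have hCpos : 0 < C := h.Cpos
  have hsqK : Real.sqrt K ^ 2 = K := Real.sq_sqrt hK0
  have hsqK1 : 1 ≤ Real.sqrt K := by
    rw [show (1:ℝ) = Real.sqrt 1 from Real.sqrt_one.symm]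
    exact Real.sqrt_le_sqrt hK1
  have hu0 : 0 ≤ u := by positivity
  clear_value u
  have hSle : S ≤ Tall := by
    rw [hSdef, hTall]
    refine Finset.sum_le_sum_of_subset_of_nonneg ?_ fun i _ _ => sq_nonneg _
    intro i hi
    simp only [Finset.mem_Ico, Finset.mem_range] at hi ⊢
    omega
  have hσle : σ ≤ Real.sqrt K * p 0 := by
    rw [hσ]
    have : S ≤ (Real.sqrt K * p 0) ^ 2 := by
      rw [mul_pow, hsqK]
      exact hSle.trans hK
    calc Real.sqrt S ≤ Real.sqrt ((Real.sqrt K * p 0) ^ 2) := Real.sqrt_le_sqrt this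
      _ = Real.sqrt K * p 0 := Real.sqrt_sq (by positivity)
  refine (probUnsat_le_sum h m).trans ?_
  have hterm : ∀ k ∈ Finset.Icc 2 m,
      (m : ℝ) ^ k * ((4 * C) ^ k * ((k : ℝ) * (Tall * S ^ (k - 1))))
        ≤ 2 * u ^ 2 * (1/2 : ℝ) ^ (k - 2) := by
    intro k hk
    have hk2 : 2 ≤ k := (Finset.mem_Icc.1 hk).1
    -- first : term ≤ k * u ^ k
    have hS_split : S ^ (k - 1) = σ ^ (k - 2) * σ ^ k := by
      rw [hSσ, ← pow_mul]
      rw [← pow_add]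
      congr 1
      omega
    have hcore : Tall * σ ^ (k - 2) ≤ Real.sqrt K ^ k * p 0 ^ k := by
      have h1 : σ ^ (k - 2) ≤ (Real.sqrt K * p 0) ^ (k - 2) :=
        pow_le_pow_left₀ hσ0 hσle _
      have h2 : Tall * σ ^ (k - 2) ≤ (K * p 0 ^ 2) * (Real.sqrt K * p 0) ^ (k - 2) :=
        mul_le_mul hK h1 (pow_nonneg hσ0 _) (by positivity)
      refine h2.trans (le_of_eq ?_)
      rw [mul_pow]
      have e1 : Real.sqrt K ^ k = Real.sqrt K ^ 2 * Real.sqrt K ^ (k - 2) := by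
        rw [← pow_add]; congr 1; omega
      have e2 : p 0 ^ k = p 0 ^ 2 * p 0 ^ (k - 2) := by
        rw [← pow_add]; congr 1; omega
      rw [e1, e2, hsqK]
      ring
    have hstep1 : (m : ℝ) ^ k * ((4 * C) ^ k * ((k : ℝ) * (Tall * S ^ (k - 1))))
        ≤ (k : ℝ) * u ^ k := by
      have hexp : (k : ℝ) * u ^ k
          = ((k : ℝ) * ((4:ℝ) ^ k * C ^ k * (m : ℝ) ^ k * σ ^ k))
            * (Real.sqrt K ^ k * p 0 ^ k) := by
        rw [hudef]
        rw [show (4 : ℝ) * Real.sqrt K * ((m : ℝ) * (C * p 0 * σ))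
          = 4 * Real.sqrt K * (m : ℝ) * C * p 0 * σ from by ring]
        rw [mul_pow, mul_pow, mul_pow, mul_pow, mul_pow]
        ring
      have hlhs : (m : ℝ) ^ k * ((4 * C) ^ k * ((k : ℝ) * (Tall * S ^ (k - 1))))
          = ((k : ℝ) * ((4:ℝ) ^ k * C ^ k * (m : ℝ) ^ k * σ ^ k)) * (Tall * σ ^ (k - 2)) := by
        rw [hS_split, mul_pow]
        ring
      rw [hexp, hlhs]
      refine mul_le_mul_of_nonneg_left hcore ?_
      positivity
    refine hstep1.trans ?_
    -- second : k * u ^ k ≤ 2 u² (1/2)^{k-2}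
    have hksplit : u ^ k = u ^ (k - 2) * u ^ 2 := by
      rw [← pow_add]; congr 1; omega
    have hkle : (k : ℝ) ≤ 2 * 2 ^ (k - 2) := by
      have := nat_le_two_pow_sub k hk2
      calc (k : ℝ) ≤ ((2 * 2 ^ (k - 2) : ℕ) : ℝ) := by exact_mod_cast this
        _ = 2 * 2 ^ (k - 2) := by push_cast; ring
    have h2u : (2 : ℝ) * u ≤ 1/2 := by
      rw [hudef] at hu ⊢
      linarith
    have hchain : (k : ℝ) * u ^ k ≤ (2 * 2 ^ (k - 2)) * (u ^ (k - 2) * u ^ 2) := by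
      rw [← hksplit]
      exact mul_le_mul_of_nonneg_right hkle (by positivity)
    refine hchain.trans ?_
    have h2u0 : (0:ℝ) ≤ 2 * u := by positivity
    have hpow : ((2:ℝ) * u) ^ (k - 2) ≤ (1/2 : ℝ) ^ (k - 2) :=
      pow_le_pow_left₀ h2u0 h2u _
    calc (2 * 2 ^ (k - 2) : ℝ) * (u ^ (k - 2) * u ^ 2)
        = 2 * u ^ 2 * ((2 * u) ^ (k - 2)) := by rw [mul_pow]; ring
      _ ≤ 2 * u ^ 2 * (1/2 : ℝ) ^ (k - 2) :=
          mul_le_mul_of_nonneg_left hpow (by positivity)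
  refine (Finset.sum_le_sum hterm).trans ?_
  rw [← Finset.mul_sum]
  have hsum : ∑ k ∈ Finset.Icc 2 m, (1/2 : ℝ) ^ (k - 2) ≤ 8 := by
    have h1 : ∀ k : ℕ, (1/2 : ℝ) ^ (k - 2) ≤ 4 * (1/2 : ℝ) ^ k := by
      intro k
      rcases Nat.lt_or_ge k 2 with hlt | hge
      · interval_cases k <;> norm_num
      · have : (1/2 : ℝ) ^ k = (1/2) ^ (k - 2) * (1/2) ^ 2 := by
          rw [← pow_add]; congr 1; omega
        rw [this]
        have : (0:ℝ) ≤ (1/2:ℝ) ^ (k-2) := by positivity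
        nlinarith
    have h2 : ∑ k ∈ Finset.Icc 2 m, (1/2 : ℝ) ^ (k - 2)
        ≤ ∑ k ∈ Finset.range (m + 1), (1/2 : ℝ) ^ (k - 2) := by
      refine Finset.sum_le_sum_of_subset_of_nonneg ?_ fun k _ _ => by positivity
      intro k hk
      simp only [Finset.mem_Icc, Finset.mem_range] at hk ⊢
      omega
    refine h2.trans ?_
    calc ∑ k ∈ Finset.range (m + 1), (1/2 : ℝ) ^ (k - 2)
        ≤ ∑ k ∈ Finset.range (m + 1), 4 * (1/2 : ℝ) ^ k :=
          Finset.sum_le_sum fun k _ => h1 k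
      _ = 4 * ∑ k ∈ Finset.range (m + 1), (1/2 : ℝ) ^ k := by rw [Finset.mul_sum]
      _ ≤ 4 * 2 := by
          refine mul_le_mul_of_nonneg_left (geo_half _) (by norm_num)
      _ = 8 := by norm_num
  calc 2 * u ^ 2 * ∑ k ∈ Finset.Icc 2 m, (1/2 : ℝ) ^ (k - 2)
      ≤ 2 * u ^ 2 * 8 := mul_le_mul_of_nonneg_left hsum (by positivity)
    _ = 16 * u ^ 2 := by ring
    _ = 256 * K * ((m : ℝ) * (C * p 0 * σ)) ^ 2 := by
        rw [hudef, mul_pow, mul_pow, hsqK]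
        ring

end NU2

namespace NU2

lemma goodP_of (p : ℕ → ℕ → ℝ) (hp : ProbEnsemble p) {n : ℕ} (hn : 2 ≤ n) :
    GoodP n (p n) := by
  obtain ⟨h1, h2, h3⟩ := hp n (by omega)
  exact ⟨hn, h1, h2, h3⟩

lemma Bpos {n : ℕ} {q : ℕ → ℝ} (h : GoodP n q) :
    0 < Cconst n q * q 0 * Real.sqrt (∑ i ∈ Finset.Ico 1 n, q i ^ 2) := by
  have hn2 := h.two_le
  have hS : 0 < ∑ i ∈ Finset.Ico 1 n, q i ^ 2 := by
    refine Finset.sum_pos' (fun i _ => sq_nonneg _) ⟨1, ?_, ?_⟩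
    · simp only [Finset.mem_Ico]; omega
    · exact pow_pos (h.pos 1 (by omega)) 2
  have := h.Cpos
  have := h.pos 0 (by omega)
  have := Real.sqrt_pos.2 hS
  positivity

end NU2

/- If `p₁² = Θ(∑ pᵢ²)` and `q_max = o(1)`, then: (i) for `m = o((C·p₁·(∑_{i=2}^n pᵢ²)^{1/2})⁻¹)`
the random formula is satisfiable whp, and (ii) there is a constant `ε ∈ (0,1)` such that for
`m ≤ (1-ε)·(C·p₁·(∑_{i=2}^n pᵢ²)^{1/2})⁻¹` it is satisfiable with positive constant probability. -/
open NU2 in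
/-- If `p₁² = Θ(∑ pᵢ²)` and `q_max = o(1)`, then: (i) for `m = o((C·p₁·(∑_{i=2}^n pᵢ²)^{1/2})⁻¹)`
the random formula is satisfiable whp, and (ii) there is a constant `ε ∈ (0,1)` such that for
`m ≤ (1-ε)·(C·p₁·(∑_{i=2}^n pᵢ²)^{1/2})⁻¹` it is satisfiable with positive constant probability. -/
theorem nonuniform_2SAT_bicycle_coarse
    (p : ℕ → ℕ → ℝ) (hp : ProbEnsemble p)
    (hΘ : (fun n => p n 0 ^ 2) =Θ[atTop] fun n => ∑ i ∈ Finset.range n, p n i ^ 2)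
    (hq : Tendsto (fun n => qmax2 n (p n)) atTop (nhds 0)) :
    (∀ m : ℕ → ℕ,
      (fun n => (m n : ℝ)) =o[atTop] (fun n => coarseBound p n) →
      Tendsto (fun n => probSat2 n (m n) (p n)) atTop (nhds 1)) ∧
    (∃ ε : ℝ, 0 < ε ∧ ε < 1 ∧ ∀ m : ℕ → ℕ,
      (∀ᶠ n in atTop, (m n : ℝ) ≤ (1 - ε) * coarseBound p n) →
      ∃ δ : ℝ, 0 < δ ∧ ∀ᶠ n in atTop, δ ≤ probSat2 n (m n) (p n)) := by
  classical
  -- the Θ-constant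
  obtain ⟨K₀, hK₀⟩ := Asymptotics.isBigO_iff.1 hΘ.2
  set K : ℝ := max K₀ 1 with hKdef
  have hK1 : (1:ℝ) ≤ K := le_max_right _ _
  have hK0 : (0:ℝ) ≤ K := le_trans zero_le_one hK1
  have hsqK : 0 < Real.sqrt K := Real.sqrt_pos.2 (by linarith)
  -- eventual bound `Tall ≤ K p₀²`
  have hKev : ∀ᶠ n in atTop, (∑ i ∈ Finset.range n, p n i ^ 2) ≤ K * p n 0 ^ 2 := by
    filter_upwards [hK₀] with n hn
    have h1 : (∑ i ∈ Finset.range n, p n i ^ 2) ≤ |∑ i ∈ Finset.range n, p n i ^ 2| :=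
      le_abs_self _
    rw [Real.norm_eq_abs, Real.norm_eq_abs] at hn
    have h2 : |p n 0 ^ 2| = p n 0 ^ 2 := abs_of_nonneg (sq_nonneg _)
    rw [h2] at hn
    refine h1.trans (hn.trans ?_)
    exact mul_le_mul_of_nonneg_right (le_max_left _ _) (sq_nonneg _)
  set B : ℕ → ℝ := fun n =>
    Cconst n (p n) * p n 0 * Real.sqrt (∑ i ∈ Finset.Ico 1 n, p n i ^ 2) with hBdef
  have hCB : ∀ n, coarseBound p n = (B n)⁻¹ := fun n => rfl
  have hGood : ∀ᶠ n in atTop, GoodP n (p n) := by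
    filter_upwards [eventually_ge_atTop 2] with n hn
    exact goodP_of p hp hn
  -- the main eventual estimate
  have hmain : ∀ (m : ℕ → ℕ),
      (∀ᶠ n in atTop, 4 * Real.sqrt K * ((m n : ℝ) * B n) ≤ 1/4) →
      (∀ᶠ n in atTop, probSat2 n (m n) (p n)
          = 1 - probUnsat2 n (m n) (p n)
        ∧ 0 ≤ probUnsat2 n (m n) (p n)
        ∧ probUnsat2 n (m n) (p n) ≤ 256 * K * ((m n : ℝ) * B n) ^ 2) := by
    intro m hm
    filter_upwards [hGood, hKev, hm] with n hg hk hmn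
    refine ⟨by linarith [probSat_add_probUnsat (m := m n) hg], probUnsat_nonneg hg, ?_⟩
    exact probUnsat_le_quad hg (m n) K hK1 hk hmn
  constructor
  · -- part (i)
    intro m hm
    -- `t n := m n * B n → 0`
    have ht0 : Tendsto (fun n => (m n : ℝ) * B n) atTop (nhds 0) := by
      rw [NormedAddCommGroup.tendsto_nhds_zero]
      intro ε hε
      have := (Asymptotics.isLittleO_iff.1 hm) (c := ε/2) (by linarith)
      filter_upwards [this, hGood] with n hn hg
      have hBpos : 0 < B n := Bpos hg
      rw [Real.norm_eq_abs]
      have hm0 : (0:ℝ) ≤ (m n : ℝ) := Nat.cast_nonneg _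
      have habs : |(m n : ℝ) * B n| = (m n : ℝ) * B n := abs_of_nonneg (by positivity)
      rw [habs]
      rw [Real.norm_eq_abs, Real.norm_eq_abs, hCB n, abs_of_nonneg hm0,
        abs_of_nonneg (le_of_lt (inv_pos.2 hBpos))] at hn
      have hthis : (m n : ℝ) * B n ≤ ε/2 * (B n)⁻¹ * B n :=
        mul_le_mul_of_nonneg_right hn hBpos.le
      rw [mul_assoc, inv_mul_cancel₀ (ne_of_gt hBpos), mul_one] at hthis
      linarith
    have hsm : ∀ᶠ n in atTop, 4 * Real.sqrt K * ((m n : ℝ) * B n) ≤ 1/4 := by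
      have hev := (NormedAddCommGroup.tendsto_nhds_zero.1 ht0)
        (1/(16 * Real.sqrt K)) (by positivity)
      filter_upwards [hev] with n hn
      rw [Real.norm_eq_abs] at hn
      have h1 : (m n : ℝ) * B n ≤ 1/(16 * Real.sqrt K) := (le_abs_self _).trans hn.le
      calc 4 * Real.sqrt K * ((m n : ℝ) * B n)
          ≤ 4 * Real.sqrt K * (1/(16 * Real.sqrt K)) := by
            refine mul_le_mul_of_nonneg_left h1 (by positivity)
        _ = 1/4 := by field_simp; ring
      
    have hev := hmain m hsm
    have hq0 : Tendsto (fun n => probUnsat2 n (m n) (p n)) atTop (nhds 0) := by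
      have hbound : Tendsto (fun n => 256 * K * ((m n : ℝ) * B n) ^ 2) atTop (nhds 0) := by
        have h2 : Tendsto (fun n => ((m n : ℝ) * B n) ^ 2) atTop (nhds 0) := by
          have := ht0.mul ht0
          rw [mul_zero] at this
          refine this.congr fun n => (sq ((m n : ℝ) * B n)).symm
        have := h2.const_mul (256 * K)
        rwa [mul_zero] at this
      refine tendsto_of_tendsto_of_tendsto_of_le_of_le' tendsto_const_nhds hbound ?_ ?_
      · filter_upwards [hev] with n hn; exact hn.2.1
      · filter_upwards [hev] with n hn; exact hn.2.2
    have : Tendsto (fun n => 1 - probUnsat2 n (m n) (p n)) atTop (nhds 1) := by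
      have := hq0.const_sub 1
      rwa [sub_zero] at this
    refine this.congr' ?_
    filter_upwards [hev] with n hn
    exact hn.1.symm
  · -- part (ii)
    set c : ℝ := min (1/(32 * Real.sqrt K)) (1/2) with hcdef
    have hc0 : 0 < c := lt_min (by positivity) (by norm_num)
    have hc1 : c < 1 := lt_of_le_of_lt (min_le_right _ _) (by norm_num)
    refine ⟨1 - c, by linarith, by linarith, fun m hm => ⟨3/4, by norm_num, ?_⟩⟩
    have htle : ∀ᶠ n in atTop, (m n : ℝ) * B n ≤ c := by
      filter_upwards [hm, hGood] with n hn hg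
      have hBpos : 0 < B n := Bpos hg
      rw [hCB n] at hn
      have h1 : (m n : ℝ) * B n ≤ (1 - (1 - c)) * (B n)⁻¹ * B n :=
        mul_le_mul_of_nonneg_right hn hBpos.le
      rw [show (1 - (1 - c)) = c from by ring, mul_assoc,
        inv_mul_cancel₀ (ne_of_gt hBpos), mul_one] at h1
      exact h1
    have hsm : ∀ᶠ n in atTop, 4 * Real.sqrt K * ((m n : ℝ) * B n) ≤ 1/4 := by
      filter_upwards [htle] with n hn
      have hcle : c ≤ 1/(32 * Real.sqrt K) := min_le_left _ _
      calc 4 * Real.sqrt K * ((m n : ℝ) * B n)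
          ≤ 4 * Real.sqrt K * (1/(32 * Real.sqrt K)) := by
            refine mul_le_mul_of_nonneg_left (hn.trans hcle) (by positivity)
        _ = 1/8 := by field_simp; ring
        _ ≤ 1/4 := by norm_num
    filter_upwards [hmain m hsm, htle, hGood] with n hn htn hg
    obtain ⟨heq, hnn, hle⟩ := hn
    have hBpos : 0 < B n := Bpos hg
    have ht0 : 0 ≤ (m n : ℝ) * B n := by positivity
    have hcle : c ≤ 1/(32 * Real.sqrt K) := min_le_left _ _
    have hsq : ((m n : ℝ) * B n) ^ 2 ≤ (1/(32 * Real.sqrt K)) ^ 2 :=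
      pow_le_pow_left₀ ht0 (htn.trans hcle) 2
    have hKsq : Real.sqrt K ^ 2 = K := Real.sq_sqrt hK0
    have h256 : 256 * K * ((m n : ℝ) * B n) ^ 2 ≤ 1/4 := by
      have h2 : 256 * K * ((m n : ℝ) * B n) ^ 2 ≤ 256 * K * (1/(32 * Real.sqrt K)) ^ 2 :=
        mul_le_mul_of_nonneg_left hsq (by positivity)
      refine h2.trans ?_
      have hKne : K ≠ 0 := by linarith
      rw [div_pow, mul_pow, hKsq]
      rw [show (256:ℝ) * K * (1^2/(32^2*K)) = 256/(32^2) * (K/K) from by ring]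
      rw [div_self hKne]
      norm_num
    rw [heq]
    linarith
end

section
/- Let Φ be a non-uniform random 2-SAT formula on n variables with probability vector p satisfying p₁² = Θ(Σ_{i=1}^n pᵢ²) and p₂² = o(Σ_{i=2}^n pᵢ²). If m = ω((C·p₁·(Σ_{i=2}^n pᵢ²)^{1/2})^{-1}), then Φ is unsatisfiable with probability 1 − o(1). -/
open Finset Filter Asymptotics

open scoped Classical

def PV (n : ℕ) (p : ℕ → ℝ) : Prop :=
  (∑ i ∈ Finset.range n, p i = 1) ∧ (∀ i j, i ≤ j → j < n → p j ≤ p i) ∧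
    (∀ i, i < n → 0 < p i)

section Core
variable {n : ℕ} {p : ℕ → ℝ}

lemma sum_pi_prod {K : Type*} [Fintype K] {m : ℕ} (f : Fin m → K → ℝ) :
    ∑ Φ : Fin m → K, ∏ j, f j (Φ j) = ∏ j, ∑ c, f j c := by
  rw [Finset.prod_univ_sum, Fintype.piFinset_univ]

lemma p0_lt_one (hn : 2 ≤ n) (hp : PV n p) : p 0 < 1 := by
  obtain ⟨h1, hmono, hpos⟩ := hp
  have h0 : 0 < n := by omega
  have hsplit : ∑ i ∈ Finset.range n, p i = p 0 + ∑ i ∈ Finset.Ico 1 n, p i := by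
    rw [Finset.range_eq_Ico, Finset.sum_eq_sum_Ico_succ_bot h0]
  have h1' : p 1 ≤ ∑ i ∈ Finset.Ico 1 n, p i :=
    Finset.single_le_sum (fun i hi => (hpos i (Finset.mem_Ico.1 hi).2).le)
      (Finset.mem_Ico.2 ⟨le_refl 1, by omega⟩)
  nlinarith [hpos 1 (by omega)]

lemma sumsq_le_p0 (hn : 2 ≤ n) (hp : PV n p) :
    ∑ i ∈ Finset.range n, p i ^ 2 ≤ p 0 := by
  obtain ⟨h1, hmono, hpos⟩ := hp
  calc ∑ i ∈ Finset.range n, p i ^ 2 ≤ ∑ i ∈ Finset.range n, p 0 * p i := by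
        apply Finset.sum_le_sum
        intro i hi
        have hi' := Finset.mem_range.1 hi
        have h0 := (hpos i hi').le
        have h2 := hmono 0 i (Nat.zero_le i) hi'
        nlinarith
    _ = p 0 * ∑ i ∈ Finset.range n, p i := by rw [Finset.mul_sum]
    _ = p 0 := by rw [h1, mul_one]

lemma sumsq_lt_one (hn : 2 ≤ n) (hp : PV n p) :
    ∑ i ∈ Finset.range n, p i ^ 2 < 1 :=
  lt_of_le_of_lt (sumsq_le_p0 hn hp) (p0_lt_one hn hp)

lemma C_pos (hn : 2 ≤ n) (hp : PV n p) : 0 < Cconst n p :=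
  inv_pos.2 (by linarith [sumsq_lt_one hn hp])

lemma w_nonneg (hn : 2 ≤ n) (hp : PV n p) (c : (Fin n × Bool) × (Fin n × Bool)) :
    0 ≤ clauseProb2 n p c := by
  unfold clauseProb2
  split
  · have h1 := (hp.2.2 _ (Fin.isLt c.1.1)).le
    have h2 := (hp.2.2 _ (Fin.isLt c.2.1)).le
    have hC : (0:ℝ) < (1 - ∑ i ∈ Finset.range n, p i ^ 2)⁻¹ :=
      inv_pos.2 (by linarith [sumsq_lt_one hn hp])
    positivity
  · exact le_refl 0

lemma sum_w (hn : 2 ≤ n) (hp : PV n p) :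
    ∑ c : (Fin n × Bool) × (Fin n × Bool), clauseProb2 n p c = 1 := by
  have h1 := hp.1
  set S := ∑ i ∈ Finset.range n, p i ^ 2 with hS
  have hne : (1:ℝ) - S ≠ 0 := by
    have := sumsq_lt_one hn hp; rw [← hS] at this; linarith
  have hfin : ∑ i : Fin n, p i = 1 := by rw [Fin.sum_univ_eq_sum_range]; exact h1
  have hfin2 : ∑ i : Fin n, p (i:ℕ) ^ 2 = S := by
    rw [Fin.sum_univ_eq_sum_range (fun k => p k ^ 2) n]
  have step : ∀ i : Fin n, ∑ j : Fin n, (if i ≠ j then (1-S)⁻¹/4 * p i * p j else 0)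
      = (1-S)⁻¹/4 * p i - (1-S)⁻¹/4 * p i * p i := by
    intro i
    have e1 : ∀ j : Fin n, (if i ≠ j then (1-S)⁻¹/4 * p i * p j else 0)
        = (1-S)⁻¹/4 * p i * p j - (if i = j then (1-S)⁻¹/4 * p i * p j else 0) := by
      intro j; by_cases h : i = j <;> simp [h]
    rw [Finset.sum_congr rfl (fun j _ => e1 j), Finset.sum_sub_distrib,
      Finset.sum_ite_eq, if_pos (Finset.mem_univ i)]
    rw [← Finset.mul_sum, hfin, mul_one]
  have expand : ∑ c : (Fin n × Bool) × (Fin n × Bool), clauseProb2 n p c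
      = 4 * ∑ i : Fin n, ∑ j : Fin n, (if i ≠ j then (1-S)⁻¹/4 * p i * p j else 0) := by
    simp only [clauseProb2, Fintype.sum_prod_type, Fintype.sum_bool]
    rw [Finset.mul_sum]
    apply Finset.sum_congr rfl
    intro i _
    rw [Finset.mul_sum, ← Finset.sum_add_distrib]
    apply Finset.sum_congr rfl
    intro j _
    ring
  rw [expand, Finset.sum_congr rfl (fun i _ => step i), Finset.sum_sub_distrib,
    ← Finset.mul_sum, hfin, mul_one]
  have last : ∑ i : Fin n, (1-S)⁻¹/4 * p (i:ℕ) * p (i:ℕ) = (1-S)⁻¹/4 * S := by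
    rw [Finset.sum_congr rfl (fun i _ => by ring :
      ∀ i ∈ (Finset.univ : Finset (Fin n)), (1-S)⁻¹/4 * p (i:ℕ) * p (i:ℕ) = (1-S)⁻¹/4 * p (i:ℕ) ^ 2),
      ← Finset.mul_sum, hfin2]
  rw [last]
  field_simp

lemma W_nonneg (hn : 2 ≤ n) (hp : PV n p) {m : ℕ} (Φ : Fin m → (Fin n × Bool) × (Fin n × Bool)) :
    0 ≤ formulaProb2 n m p Φ :=
  Finset.prod_nonneg fun j _ => w_nonneg hn hp (Φ j)

lemma sum_W (hn : 2 ≤ n) (hp : PV n p) (m : ℕ) :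
    ∑ Φ : Fin m → (Fin n × Bool) × (Fin n × Bool), formulaProb2 n m p Φ = 1 := by
  unfold formulaProb2
  rw [sum_pi_prod]
  rw [Finset.prod_congr rfl (fun j _ => sum_w hn hp), Finset.prod_const_one]

lemma expect_prod (hn : 2 ≤ n) (hp : PV n p) {m : ℕ}
    (u : Fin m → (Fin n × Bool) × (Fin n × Bool) → ℝ) (S : Finset (Fin m))
    (hu : ∀ j, j ∉ S → ∀ c, u j c = 1) :
    ∑ Φ : Fin m → (Fin n × Bool) × (Fin n × Bool),
        formulaProb2 n m p Φ * ∏ j, u j (Φ j)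
      = ∏ j ∈ S, ∑ c, clauseProb2 n p c * u j c := by
  have e1 : ∀ Φ : Fin m → (Fin n × Bool) × (Fin n × Bool),
      formulaProb2 n m p Φ * ∏ j, u j (Φ j)
        = ∏ j, (clauseProb2 n p (Φ j) * u j (Φ j)) := by
    intro Φ; rw [formulaProb2, ← Finset.prod_mul_distrib]
  rw [Finset.sum_congr rfl (fun Φ _ => e1 Φ),
    sum_pi_prod (fun j c => clauseProb2 n p c * u j c)]
  symm
  apply Finset.prod_subset (Finset.subset_univ S)
  intro j _ hj
  simp only [hu j hj, mul_one]
  exact sum_w hn hp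


end Core

noncomputable def gInd {n : ℕ} (i0 : Fin n) (s b : Bool) (i : Fin n)
    (c : (Fin n × Bool) × (Fin n × Bool)) : ℝ :=
  if c = ((i0, s), (i, b)) ∨ c = ((i, b), (i0, s)) then 1 else 0

noncomputable def qd (n : ℕ) (p : ℕ → ℝ) (i0 i : Fin n) : ℝ :=
  Cconst n p / 2 * p (i0 : ℕ) * p (i : ℕ)

noncomputable def Ncount {n : ℕ} (i0 : Fin n) (s : Bool) (m : ℕ)
    (Φ : Fin m → (Fin n × Bool) × (Fin n × Bool)) : ℝ :=
  ∑ z ∈ (Finset.univ : Finset (Fin m)).offDiag ×ˢ Finset.univ.erase i0,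
    gInd i0 s true z.2 (Φ z.1.1) * gInd i0 s false z.2 (Φ z.1.2)

section Core2
variable {n : ℕ} {p : ℕ → ℝ}

lemma g_nonneg {i0 : Fin n} {s b : Bool} {i : Fin n} (c : (Fin n × Bool) × (Fin n × Bool)) :
    0 ≤ gInd i0 s b i c := by
  unfold gInd; split <;> norm_num

lemma g_le_one {i0 : Fin n} {s b : Bool} {i : Fin n} (c : (Fin n × Bool) × (Fin n × Bool)) :
    gInd i0 s b i c ≤ 1 := by
  unfold gInd; split <;> norm_num

lemma g_mul_zero {i0 : Fin n} {s : Bool} {b b' : Bool} {i i' : Fin n}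
    (hi : i ≠ i0) (hi' : i' ≠ i0) (hne : b ≠ b' ∨ i ≠ i')
    (c : (Fin n × Bool) × (Fin n × Bool)) :
    gInd i0 s b i c * gInd i0 s b' i' c = 0 := by
  unfold gInd
  split_ifs with h h'
  · exfalso
    rcases h with rfl | rfl <;> rcases h' with h' | h' <;>
      simp only [Prod.mk.injEq, Prod.ext_iff] at h' <;> tauto
  · ring
  · ring
  · ring

lemma sum_w_g (hn : 2 ≤ n) (hp : PV n p) {i0 : Fin n} {s b : Bool} {i : Fin n} (hi : i ≠ i0) :
    ∑ c, clauseProb2 n p c * gInd i0 s b i c = qd n p i0 i := by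
  classical
  set A : (Fin n × Bool) × (Fin n × Bool) := ((i0, s), (i, b)) with hA
  set B : (Fin n × Bool) × (Fin n × Bool) := ((i, b), (i0, s)) with hB
  have hAB : A ≠ B := by
    simp only [hA, hB]
    intro h
    injection h with h1 h2
    injection h1 with ha hb
    exact hi ha.symm
  have e1 : ∀ c, clauseProb2 n p c * gInd i0 s b i c
      = if c = A ∨ c = B then clauseProb2 n p c else 0 := by
    intro c
    unfold gInd
    rw [← hA, ← hB]
    by_cases h : c = A ∨ c = B <;> simp [h]
  rw [Finset.sum_congr rfl (fun c _ => e1 c), ← Finset.sum_filter]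
  have hfil : (Finset.univ.filter (fun c => c = A ∨ c = B)) = {A, B} := by
    ext c; simp [Finset.mem_insert]
  rw [hfil, Finset.sum_pair hAB]
  have hwA : clauseProb2 n p A = (1 - ∑ k ∈ Finset.range n, p k ^ 2)⁻¹ / 4 * p (i0:ℕ) * p (i:ℕ) := by
    unfold clauseProb2
    rw [if_pos (Ne.symm hi : (A.1.1 : Fin n) ≠ A.2.1)]
  have hwB : clauseProb2 n p B = (1 - ∑ k ∈ Finset.range n, p k ^ 2)⁻¹ / 4 * p (i:ℕ) * p (i0:ℕ) := by
    unfold clauseProb2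
    rw [if_pos (hi : (B.1.1 : Fin n) ≠ B.2.1)]
  rw [hwA, hwB]
  unfold qd Cconst
  ring


lemma qd_nonneg (hn : 2 ≤ n) (hp : PV n p) (i0 i : Fin n) : 0 ≤ qd n p i0 i := by
  unfold qd
  have h1 := C_pos hn hp
  have h2 := (hp.2.2 _ (Fin.isLt i0)).le
  have h3 := (hp.2.2 _ (Fin.isLt i)).le
  positivity

end Core2

noncomputable def uFun {n m : ℕ} (i0 : Fin n) (s : Bool) (e : Fin m × Fin m) (i : Fin n)
    (j : Fin m) (c : (Fin n × Bool) × (Fin n × Bool)) : ℝ :=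
  (if j = e.1 then gInd i0 s true i c else 1) * (if j = e.2 then gInd i0 s false i c else 1)

section Core3
variable {n : ℕ} {p : ℕ → ℝ} {m : ℕ}

lemma uFun_nonneg (i0 : Fin n) (s : Bool) (e : Fin m × Fin m) (i : Fin n) (j : Fin m)
    (c : (Fin n × Bool) × (Fin n × Bool)) : 0 ≤ uFun i0 s e i j c := by
  unfold uFun
  apply mul_nonneg <;> (split <;> first | exact g_nonneg c | norm_num)

lemma uFun_le_one (i0 : Fin n) (s : Bool) (e : Fin m × Fin m) (i : Fin n) (j : Fin m)
    (c : (Fin n × Bool) × (Fin n × Bool)) : uFun i0 s e i j c ≤ 1 := by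
  unfold uFun
  apply mul_le_one₀ <;>
    (split <;> first | exact g_le_one c | exact g_nonneg c | norm_num)

lemma uFun_le_fst (i0 : Fin n) (s : Bool) (e : Fin m × Fin m) (i : Fin n) {j : Fin m}
    (h : j = e.1) (c : (Fin n × Bool) × (Fin n × Bool)) :
    uFun i0 s e i j c ≤ gInd i0 s true i c := by
  unfold uFun
  rw [if_pos h]
  apply mul_le_of_le_one_right (g_nonneg c)
  split
  · exact g_le_one c
  · norm_num

lemma uFun_le_snd (i0 : Fin n) (s : Bool) (e : Fin m × Fin m) (i : Fin n) {j : Fin m}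
    (h : j = e.2) (c : (Fin n × Bool) × (Fin n × Bool)) :
    uFun i0 s e i j c ≤ gInd i0 s false i c := by
  unfold uFun
  rw [if_pos h]
  apply mul_le_of_le_one_left (g_nonneg c)
  split
  · exact g_le_one c
  · norm_num

lemma uFun_prod (i0 : Fin n) (s : Bool) {e : Fin m × Fin m} (he : e.1 ≠ e.2) (i : Fin n)
    (Φ : Fin m → (Fin n × Bool) × (Fin n × Bool)) :
    ∏ j, uFun i0 s e i j (Φ j)
      = gInd i0 s true i (Φ e.1) * gInd i0 s false i (Φ e.2) := by
  unfold uFun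
  rw [Finset.prod_mul_distrib, Finset.prod_ite_eq' Finset.univ e.1
    (fun j => gInd i0 s true i (Φ j)), Finset.prod_ite_eq' Finset.univ e.2
    (fun j => gInd i0 s false i (Φ j))]
  simp


lemma EY_eq (hn : 2 ≤ n) (hp : PV n p) (i0 : Fin n) (s : Bool)
    {e : Fin m × Fin m} (he : e.1 ≠ e.2) {i : Fin n} (hi : i ≠ i0) :
    ∑ Φ : Fin m → (Fin n × Bool) × (Fin n × Bool),
        formulaProb2 n m p Φ * (gInd i0 s true i (Φ e.1) * gInd i0 s false i (Φ e.2))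
      = qd n p i0 i ^ 2 := by
  classical
  have e2 : ∀ Φ : Fin m → (Fin n × Bool) × (Fin n × Bool),
      formulaProb2 n m p Φ * (gInd i0 s true i (Φ e.1) * gInd i0 s false i (Φ e.2))
        = formulaProb2 n m p Φ * ∏ j, uFun i0 s e i j (Φ j) := by
    intro Φ; rw [uFun_prod i0 s he i Φ]
  rw [Finset.sum_congr rfl (fun Φ _ => e2 Φ),
    expect_prod hn hp (uFun i0 s e i) ({e.1, e.2} : Finset (Fin m))
      (by
        intro j hj c
        simp only [Finset.mem_insert, Finset.mem_singleton, not_or] at hj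
        simp [uFun, hj.1, hj.2])]
  rw [Finset.prod_pair he]
  have ha : ∑ c, clauseProb2 n p c * uFun i0 s e i e.1 c
      = qd n p i0 i := by
    have : ∀ c, uFun i0 s e i e.1 c = gInd i0 s true i c := by
      intro c; simp [uFun, he]
    rw [Finset.sum_congr rfl (fun c _ => by rw [this c])]
    exact sum_w_g hn hp hi
  have hb : ∑ c, clauseProb2 n p c * uFun i0 s e i e.2 c
      = qd n p i0 i := by
    have : ∀ c, uFun i0 s e i e.2 c = gInd i0 s false i c := by
      intro c; simp [uFun, he.symm]
    rw [Finset.sum_congr rfl (fun c _ => by rw [this c])]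
    exact sum_w_g hn hp hi
  rw [ha, hb, sq]

lemma EYY_eq (hn : 2 ≤ n) (hp : PV n p) (i0 : Fin n) (s : Bool)
    {e e' : Fin m × Fin m} (he : e.1 ≠ e.2) (he' : e'.1 ≠ e'.2) (i i' : Fin n) :
    ∑ Φ : Fin m → (Fin n × Bool) × (Fin n × Bool),
        formulaProb2 n m p Φ *
          ((gInd i0 s true i (Φ e.1) * gInd i0 s false i (Φ e.2)) *
           (gInd i0 s true i' (Φ e'.1) * gInd i0 s false i' (Φ e'.2)))
      = ∏ j ∈ ({e.1, e.2, e'.1, e'.2} : Finset (Fin m)),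
          ∑ c, clauseProb2 n p c * (uFun i0 s e i j c * uFun i0 s e' i' j c) := by
  classical
  have e2 : ∀ Φ : Fin m → (Fin n × Bool) × (Fin n × Bool),
      formulaProb2 n m p Φ *
          ((gInd i0 s true i (Φ e.1) * gInd i0 s false i (Φ e.2)) *
           (gInd i0 s true i' (Φ e'.1) * gInd i0 s false i' (Φ e'.2)))
        = formulaProb2 n m p Φ * ∏ j, (uFun i0 s e i j (Φ j) * uFun i0 s e' i' j (Φ j)) := by
    intro Φ
    rw [Finset.prod_mul_distrib, uFun_prod i0 s he i Φ, uFun_prod i0 s he' i' Φ]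
  rw [Finset.sum_congr rfl (fun Φ _ => e2 Φ),
    expect_prod hn hp (fun j c => uFun i0 s e i j c * uFun i0 s e' i' j c)
      ({e.1, e.2, e'.1, e'.2} : Finset (Fin m))
      (by
        intro j hj c
        simp only [Finset.mem_insert, Finset.mem_singleton, not_or] at hj
        simp [uFun, hj.1, hj.2.1, hj.2.2.1, hj.2.2.2])]

lemma prod_le_two {F : Fin m → ℝ} (hF0 : ∀ j, 0 ≤ F j) {S : Finset (Fin m)} {a b : Fin m}
    (hS : S = {a, b}) (hab : a ≠ b) {qa qb : ℝ} (ha : F a ≤ qa) (hb : F b ≤ qb)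
    (h0a : 0 ≤ qa) (h0b : 0 ≤ qb) :
    ∏ j ∈ S, F j ≤ qa * qb := by
  subst hS
  rw [Finset.prod_pair hab]
  exact mul_le_mul ha hb (hF0 b) h0a

lemma prod_le_three {F : Fin m → ℝ} (hF0 : ∀ j, 0 ≤ F j) {S : Finset (Fin m)} {a b c : Fin m}
    (hS : S = {a, b, c}) (hab : a ≠ b) (hac : a ≠ c) (hbc : b ≠ c)
    {qa qb qc : ℝ} (ha : F a ≤ qa) (hb : F b ≤ qb) (hc : F c ≤ qc)
    (h0a : 0 ≤ qa) (h0b : 0 ≤ qb) (h0c : 0 ≤ qc) :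
    ∏ j ∈ S, F j ≤ qa * (qb * qc) := by
  subst hS
  rw [Finset.prod_insert (by simp [hab, hac]), Finset.prod_pair hbc]
  exact mul_le_mul ha (mul_le_mul hb hc (hF0 c) h0b)
    (mul_nonneg (hF0 b) (hF0 c)) h0a

lemma prod_le_four {F : Fin m → ℝ} (hF0 : ∀ j, 0 ≤ F j) {S : Finset (Fin m)} {a b c d : Fin m}
    (hS : S = {a, b, c, d}) (hab : a ≠ b) (hac : a ≠ c) (had : a ≠ d) (hbc : b ≠ c)
    (hbd : b ≠ d) (hcd : c ≠ d)
    {qa qb qc qdd : ℝ} (ha : F a ≤ qa) (hb : F b ≤ qb) (hc : F c ≤ qc) (hd : F d ≤ qdd)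
    (h0a : 0 ≤ qa) (h0b : 0 ≤ qb) (h0c : 0 ≤ qc) (h0d : 0 ≤ qdd) :
    ∏ j ∈ S, F j ≤ qa * (qb * (qc * qdd)) := by
  subst hS
  rw [Finset.prod_insert (by simp [hab, hac, had]), Finset.prod_insert (by simp [hbc, hbd]),
    Finset.prod_pair hcd]
  exact mul_le_mul ha
    (mul_le_mul hb (mul_le_mul hc hd (hF0 d) h0c) (mul_nonneg (hF0 c) (hF0 d)) h0b)
    (mul_nonneg (hF0 b) (mul_nonneg (hF0 c) (hF0 d))) h0a

lemma EYY_le (hn : 2 ≤ n) (hp : PV n p) (i0 : Fin n) (s : Bool)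
    {e e' : Fin m × Fin m} (he : e.1 ≠ e.2) (he' : e'.1 ≠ e'.2)
    {i i' : Fin n} (hi : i ≠ i0) (hi' : i' ≠ i0) :
    ∑ Φ : Fin m → (Fin n × Bool) × (Fin n × Bool),
        formulaProb2 n m p Φ *
          ((gInd i0 s true i (Φ e.1) * gInd i0 s false i (Φ e.2)) *
           (gInd i0 s true i' (Φ e'.1) * gInd i0 s false i' (Φ e'.2)))
      ≤ qd n p i0 i ^ 2 * qd n p i0 i' ^ 2
        + (if e = e' ∧ i = i' then qd n p i0 i ^ 2 else 0)
        + (if (e'.1 = e.1 ∨ e'.1 = e.2 ∨ e'.2 = e.1 ∨ e'.2 = e.2) ∧ e ≠ e' ∧ i = i'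
            then qd n p i0 i ^ 3 else 0) := by
  classical
  rw [EYY_eq hn hp i0 s he he' i i']
  have hq := qd_nonneg hn hp i0 i
  have hq' := qd_nonneg hn hp i0 i'
  have hite1 : 0 ≤ (if e = e' ∧ i = i' then qd n p i0 i ^ 2 else 0) := by
    split <;> positivity
  have hite2 : 0 ≤ (if (e'.1 = e.1 ∨ e'.1 = e.2 ∨ e'.2 = e.1 ∨ e'.2 = e.2) ∧ e ≠ e' ∧ i = i'
      then qd n p i0 i ^ 3 else 0) := by
    split <;> positivity
  have hprod0 : 0 ≤ qd n p i0 i ^ 2 * qd n p i0 i' ^ 2 := by positivity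
  set F : Fin m → ℝ :=
    fun j => ∑ c, clauseProb2 n p c * (uFun i0 s e i j c * uFun i0 s e' i' j c) with hFdef
  have hF0 : ∀ j, 0 ≤ F j := fun j =>
    Finset.sum_nonneg fun c _ => mul_nonneg (w_nonneg hn hp c)
      (mul_nonneg (uFun_nonneg i0 s e i j c) (uFun_nonneg i0 s e' i' j c))
  have hFb : ∀ (j : Fin m) (b : Bool) (k : Fin n), k ≠ i0 →
      (∀ c, uFun i0 s e i j c * uFun i0 s e' i' j c ≤ gInd i0 s b k c) →
      F j ≤ qd n p i0 k := by
    intro j b k hk hle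
    calc F j ≤ ∑ c, clauseProb2 n p c * gInd i0 s b k c :=
          Finset.sum_le_sum fun c _ => mul_le_mul_of_nonneg_left (hle c) (w_nonneg hn hp c)
      _ = qd n p i0 k := sum_w_g hn hp hk
  have hbe1 : F e.1 ≤ qd n p i0 i :=
    hFb e.1 true i hi fun c =>
      le_trans (mul_le_of_le_one_right (uFun_nonneg i0 s e i e.1 c) (uFun_le_one i0 s e' i' e.1 c))
        (uFun_le_fst i0 s e i rfl c)
  have hbe2 : F e.2 ≤ qd n p i0 i :=
    hFb e.2 false i hi fun c =>
      le_trans (mul_le_of_le_one_right (uFun_nonneg i0 s e i e.2 c) (uFun_le_one i0 s e' i' e.2 c))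
        (uFun_le_snd i0 s e i rfl c)
  have hbe1' : F e'.1 ≤ qd n p i0 i' :=
    hFb e'.1 true i' hi' fun c =>
      le_trans (mul_le_of_le_one_left (uFun_nonneg i0 s e' i' e'.1 c) (uFun_le_one i0 s e i e'.1 c))
        (uFun_le_fst i0 s e' i' rfl c)
  have hbe2' : F e'.2 ≤ qd n p i0 i' :=
    hFb e'.2 false i' hi' fun c =>
      le_trans (mul_le_of_le_one_left (uFun_nonneg i0 s e' i' e'.2 c) (uFun_le_one i0 s e i e'.2 c))
        (uFun_le_snd i0 s e' i' rfl c)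
  have hFz : ∀ (j : Fin m) (b b' : Bool),
      (∀ c, uFun i0 s e i j c ≤ gInd i0 s b i c) →
      (∀ c, uFun i0 s e' i' j c ≤ gInd i0 s b' i' c) →
      (b ≠ b' ∨ i ≠ i') → F j = 0 := by
    intro j b b' hu hu' hbb
    have hz : ∀ c, uFun i0 s e i j c * uFun i0 s e' i' j c = 0 := by
      intro c
      have h1 : uFun i0 s e i j c * uFun i0 s e' i' j c
          ≤ gInd i0 s b i c * gInd i0 s b' i' c :=
        mul_le_mul (hu c) (hu' c) (uFun_nonneg i0 s e' i' j c) (g_nonneg c)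
      have h2 := g_mul_zero (s := s) hi hi' hbb c
      have h3 := mul_nonneg (uFun_nonneg i0 s e i j c) (uFun_nonneg i0 s e' i' j c)
      linarith [h2 ▸ h1]
    rw [hFdef]
    exact Finset.sum_eq_zero fun c _ => by rw [hz c, mul_zero]
  have hzero_case : ∀ j ∈ ({e.1, e.2, e'.1, e'.2} : Finset (Fin m)), F j = 0 →
      ∏ j ∈ ({e.1, e.2, e'.1, e'.2} : Finset (Fin m)), F j
        ≤ qd n p i0 i ^ 2 * qd n p i0 i' ^ 2
          + (if e = e' ∧ i = i' then qd n p i0 i ^ 2 else 0)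
          + (if (e'.1 = e.1 ∨ e'.1 = e.2 ∨ e'.2 = e.1 ∨ e'.2 = e.2) ∧ e ≠ e' ∧ i = i'
              then qd n p i0 i ^ 3 else 0) := by
    intro j hj hFj
    rw [Finset.prod_eq_zero hj hFj]
    linarith
  by_cases hov : (e'.1 = e.1 ∨ e'.1 = e.2 ∨ e'.2 = e.1 ∨ e'.2 = e.2)
  · by_cases hii : i = i'
    · subst hii
      by_cases hee : e = e'
      · subst hee
        rw [if_pos ⟨rfl, rfl⟩, if_neg (by tauto)]
        have hS : ({e.1, e.2, e.1, e.2} : Finset (Fin m)) = {e.1, e.2} := by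
          ext x; simp <;> tauto
        rw [hS]
        have := prod_le_two hF0 (rfl : ({e.1, e.2} : Finset (Fin m)) = {e.1, e.2}) he hbe1 hbe2 hq hq
        nlinarith
      · by_cases hz1 : e'.1 = e.2
        · exact hzero_case e.2 (by simp) (hFz e.2 false true
            (fun c => uFun_le_snd i0 s e i rfl c)
            (fun c => uFun_le_fst i0 s e' i hz1.symm c)
            (Or.inl (by decide)))
        · by_cases hz2 : e'.2 = e.1
          · exact hzero_case e.1 (by simp) (hFz e.1 true false
              (fun c => uFun_le_fst i0 s e i rfl c)
              (fun c => uFun_le_snd i0 s e' i hz2.symm c)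
              (Or.inl (by decide)))
          · rw [if_neg (by tauto), if_pos ⟨hov, hee, rfl⟩]
            rcases hov with h | h | h | h
            · have h22 : e.2 ≠ e'.2 := fun hc => hee (Prod.ext h.symm hc)
              have h12' : e.1 ≠ e'.2 := by rw [← h]; exact he'
              have hS : ({e.1, e.2, e'.1, e'.2} : Finset (Fin m)) = {e.1, e.2, e'.2} := by
                ext x; simp [h] <;> tauto
              have := prod_le_three hF0 hS he h12' h22 hbe1 hbe2 hbe2' hq hq hq
              nlinarith
            · exact absurd h hz1
            · exact absurd h hz2
            · have h11 : e.1 ≠ e'.1 := fun hc => hee (Prod.ext hc h.symm)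
              have h21 : e.2 ≠ e'.1 := fun hc => hz1 hc.symm
              have hS : ({e.1, e.2, e'.1, e'.2} : Finset (Fin m)) = {e.1, e.2, e'.1} := by
                ext x; simp [h] <;> tauto
              have := prod_le_three hF0 hS he h11 h21 hbe1 hbe2 hbe1' hq hq hq
              nlinarith
    · -- i ≠ i' : zero
      rcases hov with h | h | h | h
      · exact hzero_case e.1 (by simp) (hFz e.1 true true (fun c => uFun_le_fst i0 s e i rfl c)
          (fun c => uFun_le_fst i0 s e' i' h.symm c) (Or.inr hii))
      · exact hzero_case e.2 (by simp) (hFz e.2 false true (fun c => uFun_le_snd i0 s e i rfl c)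
          (fun c => uFun_le_fst i0 s e' i' h.symm c) (Or.inr hii))
      · exact hzero_case e.1 (by simp) (hFz e.1 true false (fun c => uFun_le_fst i0 s e i rfl c)
          (fun c => uFun_le_snd i0 s e' i' h.symm c) (Or.inr hii))
      · exact hzero_case e.2 (by simp) (hFz e.2 false false (fun c => uFun_le_snd i0 s e i rfl c)
          (fun c => uFun_le_snd i0 s e' i' h.symm c) (Or.inr hii))
  · -- no overlap
    push_neg at hov
    obtain ⟨h1, h2, h3, h4⟩ := hov
    have := prod_le_four hF0
      (rfl : ({e.1, e.2, e'.1, e'.2} : Finset (Fin m)) = {e.1, e.2, e'.1, e'.2})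
      he (Ne.symm h1) (Ne.symm h3) (Ne.symm h2) (Ne.symm h4) he'
      hbe1 hbe2 hbe1' hbe2' hq hq hq' hq'
    nlinarith

lemma EN_eq (hn : 2 ≤ n) (hp : PV n p) (i0 : Fin n) (s : Bool) :
    ∑ Φ : Fin m → (Fin n × Bool) × (Fin n × Bool),
        formulaProb2 n m p Φ * Ncount i0 s m Φ
      = ∑ z ∈ (Finset.univ : Finset (Fin m)).offDiag ×ˢ Finset.univ.erase i0,
          qd n p i0 z.2 ^ 2 := by
  classical
  have e1 : ∀ Φ : Fin m → (Fin n × Bool) × (Fin n × Bool),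
      formulaProb2 n m p Φ * Ncount i0 s m Φ
        = ∑ z ∈ (Finset.univ : Finset (Fin m)).offDiag ×ˢ Finset.univ.erase i0,
            formulaProb2 n m p Φ *
              (gInd i0 s true z.2 (Φ z.1.1) * gInd i0 s false z.2 (Φ z.1.2)) := by
    intro Φ; rw [Ncount, Finset.mul_sum]
  rw [Finset.sum_congr rfl (fun Φ _ => e1 Φ), Finset.sum_comm]
  apply Finset.sum_congr rfl
  intro z hz
  have hz' := Finset.mem_product.1 hz
  have hod := Finset.mem_offDiag.1 hz'.1
  exact EY_eq hn hp i0 s hod.2.2 (Finset.ne_of_mem_erase hz'.2)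

lemma EN2_le (hn : 2 ≤ n) (hp : PV n p) (i0 : Fin n) (s : Bool)
    {Q : ℝ} (hQ : ∀ i : Fin n, i ≠ i0 → qd n p i0 i ≤ Q) (hQ0 : 0 ≤ Q) :
    ∑ Φ : Fin m → (Fin n × Bool) × (Fin n × Bool),
        formulaProb2 n m p Φ * (Ncount i0 s m Φ) ^ 2
      ≤ (∑ z ∈ (Finset.univ : Finset (Fin m)).offDiag ×ˢ Finset.univ.erase i0,
            qd n p i0 z.2 ^ 2) ^ 2
        + (∑ z ∈ (Finset.univ : Finset (Fin m)).offDiag ×ˢ Finset.univ.erase i0,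
            qd n p i0 z.2 ^ 2)
        + 4 * m * Q * (∑ z ∈ (Finset.univ : Finset (Fin m)).offDiag ×ˢ Finset.univ.erase i0,
            qd n p i0 z.2 ^ 2) := by
  classical
  set Z := (Finset.univ : Finset (Fin m)).offDiag ×ˢ Finset.univ.erase i0 with hZ
  set R := ∑ z ∈ Z, qd n p i0 z.2 ^ 2 with hR
  have e1 : ∀ Φ : Fin m → (Fin n × Bool) × (Fin n × Bool),
      formulaProb2 n m p Φ * Ncount i0 s m Φ ^ 2
        = ∑ z ∈ Z, ∑ z' ∈ Z, formulaProb2 n m p Φ *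
            ((gInd i0 s true z.2 (Φ z.1.1) * gInd i0 s false z.2 (Φ z.1.2)) *
             (gInd i0 s true z'.2 (Φ z'.1.1) * gInd i0 s false z'.2 (Φ z'.1.2))) := by
    intro Φ
    rw [sq, Ncount, Finset.sum_mul_sum, Finset.mul_sum]
    exact Finset.sum_congr rfl fun z _ => by rw [Finset.mul_sum]
  rw [Finset.sum_congr rfl (fun Φ _ => e1 Φ), Finset.sum_comm]
  have key : ∀ z ∈ Z, (∑ Φ : Fin m → (Fin n × Bool) × (Fin n × Bool), ∑ z' ∈ Z,
      formulaProb2 n m p Φ *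
            ((gInd i0 s true z.2 (Φ z.1.1) * gInd i0 s false z.2 (Φ z.1.2)) *
             (gInd i0 s true z'.2 (Φ z'.1.1) * gInd i0 s false z'.2 (Φ z'.1.2))))
      ≤ ∑ z' ∈ Z, (qd n p i0 z.2 ^ 2 * qd n p i0 z'.2 ^ 2
        + (if z.1 = z'.1 ∧ z.2 = z'.2 then qd n p i0 z.2 ^ 2 else 0)
        + (if (z'.1.1 = z.1.1 ∨ z'.1.1 = z.1.2 ∨ z'.1.2 = z.1.1 ∨ z'.1.2 = z.1.2)
              ∧ z.1 ≠ z'.1 ∧ z.2 = z'.2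
            then qd n p i0 z.2 ^ 3 else 0)) := by
    intro z hz
    rw [Finset.sum_comm]
    apply Finset.sum_le_sum
    intro z' hz'
    have hmz := Finset.mem_product.1 hz
    have hmz' := Finset.mem_product.1 hz'
    exact EYY_le hn hp i0 s (Finset.mem_offDiag.1 hmz.1).2.2 (Finset.mem_offDiag.1 hmz'.1).2.2
      (Finset.ne_of_mem_erase hmz.2) (Finset.ne_of_mem_erase hmz'.2)
  calc ∑ z ∈ Z, (∑ Φ : Fin m → (Fin n × Bool) × (Fin n × Bool), ∑ z' ∈ Z,
      formulaProb2 n m p Φ *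
            ((gInd i0 s true z.2 (Φ z.1.1) * gInd i0 s false z.2 (Φ z.1.2)) *
             (gInd i0 s true z'.2 (Φ z'.1.1) * gInd i0 s false z'.2 (Φ z'.1.2))))
      ≤ ∑ z ∈ Z, ∑ z' ∈ Z, (qd n p i0 z.2 ^ 2 * qd n p i0 z'.2 ^ 2
        + (if z.1 = z'.1 ∧ z.2 = z'.2 then qd n p i0 z.2 ^ 2 else 0)
        + (if (z'.1.1 = z.1.1 ∨ z'.1.1 = z.1.2 ∨ z'.1.2 = z.1.1 ∨ z'.1.2 = z.1.2)
              ∧ z.1 ≠ z'.1 ∧ z.2 = z'.2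
            then qd n p i0 z.2 ^ 3 else 0)) := Finset.sum_le_sum key
    _ ≤ R ^ 2 + R + 4 * m * Q * R := by
        have split1 : ∀ z ∈ Z, (∑ z' ∈ Z, (qd n p i0 z.2 ^ 2 * qd n p i0 z'.2 ^ 2
            + (if z.1 = z'.1 ∧ z.2 = z'.2 then qd n p i0 z.2 ^ 2 else 0)
            + (if (z'.1.1 = z.1.1 ∨ z'.1.1 = z.1.2 ∨ z'.1.2 = z.1.1 ∨ z'.1.2 = z.1.2)
                  ∧ z.1 ≠ z'.1 ∧ z.2 = z'.2
                then qd n p i0 z.2 ^ 3 else 0)))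
            = (∑ z' ∈ Z, qd n p i0 z.2 ^ 2 * qd n p i0 z'.2 ^ 2)
              + (∑ z' ∈ Z, if z.1 = z'.1 ∧ z.2 = z'.2 then qd n p i0 z.2 ^ 2 else 0)
              + (∑ z' ∈ Z, if (z'.1.1 = z.1.1 ∨ z'.1.1 = z.1.2 ∨ z'.1.2 = z.1.1 ∨ z'.1.2 = z.1.2)
                  ∧ z.1 ≠ z'.1 ∧ z.2 = z'.2
                then qd n p i0 z.2 ^ 3 else 0) := by
          intro z _
          rw [Finset.sum_add_distrib, Finset.sum_add_distrib]
        rw [Finset.sum_congr rfl split1, Finset.sum_add_distrib, Finset.sum_add_distrib]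
        have hA : ∑ z ∈ Z, ∑ z' ∈ Z, qd n p i0 z.2 ^ 2 * qd n p i0 z'.2 ^ 2 = R ^ 2 := by
          rw [← Finset.sum_mul_sum, ← sq]
        have hB : ∑ z ∈ Z, (∑ z' ∈ Z, if z.1 = z'.1 ∧ z.2 = z'.2 then qd n p i0 z.2 ^ 2 else 0)
            = R := by
          apply Finset.sum_congr rfl
          intro z hz
          have hBptw : ∀ z' ∈ Z, (if z.1 = z'.1 ∧ z.2 = z'.2 then qd n p i0 z.2 ^ 2 else 0)
              = (if z' = z then qd n p i0 z.2 ^ 2 else 0) := by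
            intro z' _
            refine if_congr ?_ rfl rfl
            exact ⟨fun h => Prod.ext h.1.symm h.2.symm,
              fun h => ⟨(congrArg Prod.fst h).symm, (congrArg Prod.snd h).symm⟩⟩
          rw [Finset.sum_congr rfl hBptw, Finset.sum_ite_eq' Z z (fun _ => qd n p i0 z.2 ^ 2),
            if_pos hz]
        have hC : ∑ z ∈ Z, (∑ z' ∈ Z,
            if (z'.1.1 = z.1.1 ∨ z'.1.1 = z.1.2 ∨ z'.1.2 = z.1.1 ∨ z'.1.2 = z.1.2)
                  ∧ z.1 ≠ z'.1 ∧ z.2 = z'.2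
                then qd n p i0 z.2 ^ 3 else 0)
            ≤ ∑ z ∈ Z, 4 * m * Q * qd n p i0 z.2 ^ 2 := by
          apply Finset.sum_le_sum
          intro z hz
          have hmz := Finset.mem_product.1 hz
          have hqz := qd_nonneg hn hp i0 z.2
          have hq3 : qd n p i0 z.2 ^ 3 ≤ Q * qd n p i0 z.2 ^ 2 := by
            have := hQ z.2 (Finset.ne_of_mem_erase hmz.2)
            nlinarith
          set v := qd n p i0 z.2 ^ 3 with hv
          have hv0 : 0 ≤ v := by positivity
          set bad : Finset (Fin m × Fin m) :=
            ((({z.1.1, z.1.2} : Finset (Fin m)) ×ˢ (Finset.univ : Finset (Fin m)))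
              ∪ ((Finset.univ : Finset (Fin m)) ×ˢ ({z.1.1, z.1.2} : Finset (Fin m)))) with hbad
          have hsub : Z.filter (fun z' =>
              (z'.1.1 = z.1.1 ∨ z'.1.1 = z.1.2 ∨ z'.1.2 = z.1.1 ∨ z'.1.2 = z.1.2)
                  ∧ z.1 ≠ z'.1 ∧ z.2 = z'.2)
              ⊆ bad ×ˢ ({z.2} : Finset (Fin n)) := by
            intro x hx
            simp only [hbad, Finset.mem_filter, Finset.mem_product, Finset.mem_union,
              Finset.mem_insert, Finset.mem_singleton, Finset.mem_univ, true_and, and_true] at hx ⊢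
            tauto
          have hcard2 : (bad ×ˢ ({z.2} : Finset (Fin n))).card ≤ 4 * m := by
            rw [Finset.card_product, Finset.card_singleton, mul_one]
            calc bad.card ≤ (({z.1.1, z.1.2} : Finset (Fin m)) ×ˢ (Finset.univ : Finset (Fin m))).card
                + ((Finset.univ : Finset (Fin m)) ×ˢ ({z.1.1, z.1.2} : Finset (Fin m))).card :=
                Finset.card_union_le _ _
              _ ≤ 2 * m + m * 2 := by
                  rw [Finset.card_product, Finset.card_product, Finset.card_univ, Fintype.card_fin]
                  have h2 : ({z.1.1, z.1.2} : Finset (Fin m)).card ≤ 2 :=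
                    le_trans (Finset.card_insert_le _ _) (by simp)
                  exact add_le_add (Nat.mul_le_mul_right m h2) (Nat.mul_le_mul_left m h2)
              _ = 4 * m := by ring
          have hcard : (Z.filter (fun z' =>
              (z'.1.1 = z.1.1 ∨ z'.1.1 = z.1.2 ∨ z'.1.2 = z.1.1 ∨ z'.1.2 = z.1.2)
                  ∧ z.1 ≠ z'.1 ∧ z.2 = z'.2)).card ≤ 4 * m :=
            le_trans (Finset.card_le_card hsub) hcard2
          calc (∑ z' ∈ Z,
              if (z'.1.1 = z.1.1 ∨ z'.1.1 = z.1.2 ∨ z'.1.2 = z.1.1 ∨ z'.1.2 = z.1.2)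
                  ∧ z.1 ≠ z'.1 ∧ z.2 = z'.2
                then qd n p i0 z.2 ^ 3 else 0)
              = ∑ z' ∈ Z.filter (fun z' =>
                  (z'.1.1 = z.1.1 ∨ z'.1.1 = z.1.2 ∨ z'.1.2 = z.1.1 ∨ z'.1.2 = z.1.2)
                      ∧ z.1 ≠ z'.1 ∧ z.2 = z'.2), v := (Finset.sum_filter _ _).symm
            _ = (Z.filter (fun z' =>
                  (z'.1.1 = z.1.1 ∨ z'.1.1 = z.1.2 ∨ z'.1.2 = z.1.1 ∨ z'.1.2 = z.1.2)
                      ∧ z.1 ≠ z'.1 ∧ z.2 = z'.2)).card • v := Finset.sum_const _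
            _ ≤ (4 * m : ℕ) • v := nsmul_le_nsmul_left hv0 hcard
            _ = (4 * m : ℝ) * v := by rw [nsmul_eq_mul]; norm_num
            _ ≤ 4 * m * (Q * qd n p i0 z.2 ^ 2) := by
                apply mul_le_mul_of_nonneg_left hq3
                positivity
            _ = 4 * m * Q * qd n p i0 z.2 ^ 2 := by ring
        have hCsum : ∑ z ∈ Z, 4 * m * Q * qd n p i0 z.2 ^ 2 = 4 * m * Q * R := by
          rw [hR, Finset.mul_sum]
        linarith [hA, hB, hC, hCsum.symm ▸ hC]


lemma P0_le (hn : 2 ≤ n) (hp : PV n p) (i0 : Fin n) (s : Bool) {Q : ℝ}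
    (hQ : ∀ i : Fin n, i ≠ i0 → qd n p i0 i ≤ Q) (hQ0 : 0 ≤ Q)
    (hR : 0 < ∑ z ∈ (Finset.univ : Finset (Fin m)).offDiag ×ˢ Finset.univ.erase i0,
        qd n p i0 z.2 ^ 2) :
    ∑ Φ : Fin m → (Fin n × Bool) × (Fin n × Bool),
        (if Ncount i0 s m Φ = 0 then formulaProb2 n m p Φ else 0)
      ≤ (1 + 4 * m * Q) / (∑ z ∈ (Finset.univ : Finset (Fin m)).offDiag ×ˢ
          Finset.univ.erase i0, qd n p i0 z.2 ^ 2) := by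
  classical
  set R := ∑ z ∈ (Finset.univ : Finset (Fin m)).offDiag ×ˢ Finset.univ.erase i0,
      qd n p i0 z.2 ^ 2 with hRdef
  set W := formulaProb2 n m p with hW
  set N := Ncount i0 s m with hN
  set P0 := ∑ Φ : Fin m → (Fin n × Bool) × (Fin n × Bool), (if N Φ = 0 then W Φ else 0) with hP0
  set P1 := ∑ Φ : Fin m → (Fin n × Bool) × (Fin n × Bool), (if N Φ = 0 then 0 else W Φ) with hP1
  have hWnn : ∀ Φ, 0 ≤ W Φ := fun Φ => W_nonneg hn hp Φ
  have h01 : P0 + P1 = 1 := by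
    rw [hP0, hP1, ← Finset.sum_add_distrib]
    rw [Finset.sum_congr rfl (fun Φ _ => by
      by_cases h : N Φ = 0 <;> simp [h] :
      ∀ Φ ∈ (Finset.univ : Finset (Fin m → (Fin n × Bool) × (Fin n × Bool))),
        ((if N Φ = 0 then W Φ else 0) + (if N Φ = 0 then 0 else W Φ)) = W Φ)]
    exact sum_W hn hp m
  have hP1nn : 0 ≤ P1 := Finset.sum_nonneg fun Φ _ => by
    by_cases h : N Φ = 0 <;> simp [h, hWnn Φ]
  set f : (Fin m → (Fin n × Bool) × (Fin n × Bool)) → ℝ :=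
    fun Φ => Real.sqrt (W Φ) * (if N Φ = 0 then 0 else 1) with hf
  set g : (Fin m → (Fin n × Bool) × (Fin n × Bool)) → ℝ :=
    fun Φ => Real.sqrt (W Φ) * N Φ with hg
  have cs := Finset.sum_mul_sq_le_sq_mul_sq Finset.univ f g
  have hfg : ∀ Φ, f Φ * g Φ = W Φ * N Φ := by
    intro Φ
    simp only [hf, hg]
    have hss := Real.mul_self_sqrt (hWnn Φ)
    by_cases h : N Φ = 0
    · simp [h]
    · rw [if_neg h, mul_one, ← mul_assoc, hss]
  have hf2 : ∀ Φ, f Φ ^ 2 = (if N Φ = 0 then 0 else W Φ) := by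
    intro Φ
    simp only [hf]
    by_cases h : N Φ = 0
    · simp [h]
    · rw [if_neg h, if_neg h, mul_one, Real.sq_sqrt (hWnn Φ)]
  have hg2 : ∀ Φ, g Φ ^ 2 = W Φ * N Φ ^ 2 := by
    intro Φ
    simp only [hg]
    rw [mul_pow, Real.sq_sqrt (hWnn Φ)]
  rw [Finset.sum_congr rfl (fun Φ _ => hfg Φ), Finset.sum_congr rfl (fun Φ _ => hf2 Φ),
    Finset.sum_congr rfl (fun Φ _ => hg2 Φ)] at cs
  have hEN : ∑ Φ : Fin m → (Fin n × Bool) × (Fin n × Bool), W Φ * N Φ = R := by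
    rw [hW, hN, hRdef]
    exact EN_eq hn hp i0 s
  have hEN2 : ∑ Φ : Fin m → (Fin n × Bool) × (Fin n × Bool), W Φ * N Φ ^ 2
      ≤ R ^ 2 + R + 4 * m * Q * R := by
    rw [hW, hN, hRdef]
    exact EN2_le hn hp i0 s hQ hQ0
  rw [hEN, ← hP1] at cs
  set U := R ^ 2 + R + 4 * m * Q * R with hU
  have hmQ : (0:ℝ) ≤ 4 * m * Q := by positivity
  have hUpos : 0 < U := by nlinarith
  have hcs2 : R ^ 2 ≤ P1 * U := le_trans cs (mul_le_mul_of_nonneg_left hEN2 hP1nn)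
  have hstep : R ^ 2 / U ≤ P1 := (div_le_iff₀ hUpos).2 hcs2
  have hRne : R ≠ 0 := ne_of_gt hR
  have hUne : U ≠ 0 := ne_of_gt hUpos
  have heq : 1 - R ^ 2 / U = (R + 4 * m * Q * R) / U := by
    field_simp
    ring
  have hR2U : R ^ 2 ≤ U := by nlinarith
  have hnum : (0:ℝ) ≤ R + 4 * m * Q * R := by nlinarith
  have hmono2 : (R + 4 * m * Q * R) / U ≤ (R + 4 * m * Q * R) / R ^ 2 := by
    gcongr
  have hfin : 1 - P1 ≤ (1 + 4 * m * Q) / R :=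
    calc 1 - P1 ≤ 1 - R ^ 2 / U := by linarith
      _ = (R + 4 * m * Q * R) / U := heq
      _ ≤ (R + 4 * m * Q * R) / R ^ 2 := hmono2
      _ = (1 + 4 * m * Q) / R := by
          rw [sq]
          field_simp
  linarith

lemma force_val (i0 : Fin n) (s : Bool) {Φ : Fin m → (Fin n × Bool) × (Fin n × Bool)}
    (h : Ncount i0 s m Φ ≠ 0) {a : Fin n → Bool}
    (ha : ∀ j, a (Φ j).1.1 = (Φ j).1.2 ∨ a (Φ j).2.1 = (Φ j).2.2) :
    a i0 = s := by
  obtain ⟨z, hzm, hz⟩ := Finset.exists_ne_zero_of_sum_ne_zero h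
  have h1 : gInd i0 s true z.2 (Φ z.1.1) ≠ 0 := by
    intro h0; rw [h0, zero_mul] at hz; exact hz rfl
  have h2 : gInd i0 s false z.2 (Φ z.1.2) ≠ 0 := by
    intro h0; rw [h0, mul_zero] at hz; exact hz rfl
  unfold gInd at h1 h2
  have c1 : Φ z.1.1 = ((i0, s), (z.2, true)) ∨ Φ z.1.1 = ((z.2, true), (i0, s)) := by
    by_contra hc; exact h1 (if_neg hc)
  have c2 : Φ z.1.2 = ((i0, s), (z.2, false)) ∨ Φ z.1.2 = ((z.2, false), (i0, s)) := by
    by_contra hc; exact h2 (if_neg hc)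
  have d1 : a i0 = s ∨ a z.2 = true := by
    rcases c1 with hh | hh
    · have h3 := ha z.1.1; rw [hh] at h3; exact h3
    · have h3 := ha z.1.1; rw [hh] at h3; exact h3.symm
  have d2 : a i0 = s ∨ a z.2 = false := by
    rcases c2 with hh | hh
    · have h3 := ha z.1.2; rw [hh] at h3; exact h3
    · have h3 := ha z.1.2; rw [hh] at h3; exact h3.symm
  rcases d1 with h | h
  · exact h
  rcases d2 with h' | h'
  · exact h'
  rw [h] at h'
  exact absurd h' (by simp)

lemma probSat_le (hn : 2 ≤ n) (hp : PV n p) (m : ℕ) (i0 : Fin n) :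
    probSat2 n m p ≤
      (∑ Φ : Fin m → (Fin n × Bool) × (Fin n × Bool),
        if Ncount i0 true m Φ = 0 then formulaProb2 n m p Φ else 0)
      + (∑ Φ : Fin m → (Fin n × Bool) × (Fin n × Bool),
        if Ncount i0 false m Φ = 0 then formulaProb2 n m p Φ else 0) := by
  rw [probSat2, ← Finset.sum_add_distrib]
  apply Finset.sum_le_sum
  intro Φ _
  have hW := W_nonneg hn hp Φ
  have hit1 : 0 ≤ (if Ncount i0 true m Φ = 0 then formulaProb2 n m p Φ else 0) := by
    split <;> simp [hW]
  have hit2 : 0 ≤ (if Ncount i0 false m Φ = 0 then formulaProb2 n m p Φ else 0) := by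
    split <;> simp [hW]
  by_cases hs : Sat2 Φ
  · rw [if_pos hs]
    obtain ⟨a, ha⟩ := hs
    by_cases h1 : Ncount i0 true m Φ = 0
    · rw [if_pos h1]
      linarith
    · have h2 : Ncount i0 false m Φ = 0 := by
        by_contra h2
        have e1 := force_val i0 true h1 ha
        have e2 := force_val i0 false h2 ha
        rw [e1] at e2
        exact absurd e2 (by simp)
      rw [if_neg h1, if_pos h2]
      linarith
  · rw [if_neg hs]
    linarith

set_option maxHeartbeats 2000000 in
lemma main_bound (hn : 2 ≤ n) (hp : PV n p) {m : ℕ} (hm2 : 2 ≤ m) :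
    probSat2 n m p
      ≤ 16 / (m * (Cconst n p * p 0 * Real.sqrt (∑ i ∈ Finset.Ico 1 n, p i ^ 2))) ^ 2
        + 32 / (m * (Cconst n p * p 0 * Real.sqrt (∑ i ∈ Finset.Ico 1 n, p i ^ 2))) := by
  classical
  have hCpos := C_pos hn hp
  have hp0 := hp.2.2 0 (by omega)
  have hp1 := hp.2.2 1 (by omega)
  set i0 : Fin n := ⟨0, by omega⟩ with hi0
  set S1 := ∑ i ∈ Finset.Ico 1 n, p i ^ 2 with hS1
  have hS1pos : 0 < S1 := by
    rw [hS1]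
    apply Finset.sum_pos' (fun i hi => sq_nonneg (p i))
    exact ⟨1, Finset.mem_Ico.2 ⟨le_refl 1, by omega⟩, by positivity⟩
  set C := Cconst n p with hC
  set Q : ℝ := C / 2 * p 0 * p 1 with hQdef
  have hQ0 : 0 ≤ Q := by positivity
  have hQ : ∀ i : Fin n, i ≠ i0 → qd n p i0 i ≤ Q := by
    intro i hi
    have hvi : 1 ≤ (i : ℕ) := by
      rcases Nat.eq_zero_or_pos (i : ℕ) with h | h
      · exact absurd (Fin.ext h : i = i0) hi
      · omega
    have hle : p (i : ℕ) ≤ p 1 := hp.2.1 1 (i : ℕ) hvi (Fin.isLt i)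
    unfold qd
    rw [hQdef, hC]
    have : ((i0 : Fin n) : ℕ) = 0 := rfl
    rw [this]
    have h0 : (0:ℝ) ≤ Cconst n p / 2 * p 0 := by positivity
    exact mul_le_mul_of_nonneg_left hle h0
  -- the sum R
  set R := ∑ z ∈ (Finset.univ : Finset (Fin m)).offDiag ×ˢ Finset.univ.erase i0,
      qd n p i0 z.2 ^ 2 with hRdef
  have hsum_erase : ∑ i ∈ Finset.univ.erase i0, p (i : ℕ) ^ 2 = S1 := by
    have e1 : ∑ i ∈ Finset.univ.erase i0, p (i:ℕ) ^ 2 + p ((i0 : Fin n) : ℕ) ^ 2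
        = ∑ i : Fin n, p (i:ℕ) ^ 2 :=
      Finset.sum_erase_add _ _ (Finset.mem_univ i0)
    have e2 : ∑ i : Fin n, p (i:ℕ) ^ 2 = ∑ i ∈ Finset.range n, p i ^ 2 :=
      Fin.sum_univ_eq_sum_range (fun k => p k ^ 2) n
    have e3 : ∑ i ∈ Finset.range n, p i ^ 2 = p 0 ^ 2 + S1 := by
      rw [Finset.range_eq_Ico, Finset.sum_eq_sum_Ico_succ_bot (by omega : 0 < n)]
    have e4 : ((i0 : Fin n) : ℕ) = 0 := rfl
    rw [e4] at e1
    linarith [e1, e2 ▸ e1]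
  have hr : ∑ i ∈ Finset.univ.erase i0, qd n p i0 i ^ 2 = (C / 2 * p 0) ^ 2 * S1 := by
    have e5 : ∀ i ∈ Finset.univ.erase i0, qd n p i0 i ^ 2 = (C / 2 * p 0) ^ 2 * p (i:ℕ) ^ 2 := by
      intro i _
      unfold qd
      rw [hC, (rfl : ((i0 : Fin n) : ℕ) = 0)]
      ring
    rw [Finset.sum_congr rfl e5, ← Finset.mul_sum, hsum_erase]
  have hcard : (((Finset.univ : Finset (Fin m)).offDiag.card : ℝ)) = (m:ℝ) * m - m := by
    rw [Finset.offDiag_card, Finset.card_univ, Fintype.card_fin]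
    have hle : m ≤ m * m := Nat.le_mul_of_pos_left m (by omega)
    push_cast [Nat.cast_sub hle]
    ring
  have hRval : R = ((m:ℝ) * m - m) * ((C / 2 * p 0) ^ 2 * S1) := by
    rw [hRdef]
    rw [Finset.sum_product]
    rw [Finset.sum_congr rfl (fun e _ => hr), Finset.sum_const, nsmul_eq_mul, hcard]
  set X := C * p 0 * Real.sqrt S1 with hX
  have hXpos : 0 < X := by
    rw [hX]
    have := Real.sqrt_pos.2 hS1pos
    positivity
  have hX2 : X ^ 2 = (C * p 0) ^ 2 * S1 := by
    rw [hX, mul_pow, Real.sq_sqrt hS1pos.le]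
  have hm2' : (2:ℝ) ≤ (m:ℝ) := by exact_mod_cast hm2
  have htpos : 0 < (m:ℝ) * X := by positivity
  have hR8 : ((m:ℝ) * X) ^ 2 / 8 ≤ R := by
    rw [hRval]
    have h1 : ((m:ℝ) * X) ^ 2 = (m:ℝ)^2 * ((C * p 0)^2 * S1) := by rw [mul_pow, hX2]
    have h2 : (0:ℝ) ≤ (C * p 0)^2 * S1 := by positivity
    nlinarith [h2, hm2', sq_nonneg ((m:ℝ) - 2)]
  have hRpos : 0 < R := lt_of_lt_of_le (by positivity) hR8
  -- apply the two P0 bounds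
  have hRpos' : 0 < ∑ z ∈ (Finset.univ : Finset (Fin m)).offDiag ×ˢ Finset.univ.erase i0,
      qd n p i0 z.2 ^ 2 := by rw [← hRdef]; exact hRpos
  have hb1 := P0_le hn hp i0 true hQ hQ0 hRpos'
  have hb2 := P0_le hn hp i0 false hQ hQ0 hRpos'
  have hmain := probSat_le hn hp m i0
  -- numerator bound
  have hp1s : p 1 ≤ Real.sqrt S1 := by
    have h1 : p 1 ^ 2 ≤ S1 := by
      rw [hS1]
      exact Finset.single_le_sum (fun i _ => sq_nonneg (p i))
        (Finset.mem_Ico.2 ⟨le_refl 1, by omega⟩)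
    calc p 1 = Real.sqrt (p 1 ^ 2) := (Real.sqrt_sq hp1.le).symm
      _ ≤ Real.sqrt S1 := Real.sqrt_le_sqrt h1
  have hQt : (m:ℝ) * Q ≤ ((m:ℝ) * X) / 2 := by
    rw [hQdef, hX]
    have h0 : (0:ℝ) ≤ (m:ℝ) * (C / 2 * p 0) := by positivity
    calc (m:ℝ) * (C / 2 * p 0 * p 1) = (m:ℝ) * (C / 2 * p 0) * p 1 := by ring
      _ ≤ (m:ℝ) * (C / 2 * p 0) * Real.sqrt S1 := mul_le_mul_of_nonneg_left hp1s h0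
      _ = (m:ℝ) * (C * p 0 * Real.sqrt S1) / 2 := by ring
  have hfrac : (1 + 4 * m * Q) / R ≤ 8 / ((m:ℝ) * X) ^ 2 + 16 / ((m:ℝ) * X) := by
    have h1 : 1 + 4 * (m:ℝ) * Q ≤ 1 + 2 * ((m:ℝ) * X) := by nlinarith [hQt]
    have h2 : (1 + 4 * (m:ℝ) * Q) / R ≤ (1 + 2 * ((m:ℝ) * X)) / (((m:ℝ) * X) ^ 2 / 8) := by
      apply div_le_div₀ (by positivity) h1 (by positivity) hR8
    have h3 : (1 + 2 * ((m:ℝ) * X)) / (((m:ℝ) * X) ^ 2 / 8)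
        = 8 / ((m:ℝ) * X) ^ 2 + 16 / ((m:ℝ) * X) := by
      field_simp
      ring
    linarith
  calc probSat2 n m p
      ≤ (∑ Φ : Fin m → (Fin n × Bool) × (Fin n × Bool),
          if Ncount i0 true m Φ = 0 then formulaProb2 n m p Φ else 0)
        + (∑ Φ : Fin m → (Fin n × Bool) × (Fin n × Bool),
          if Ncount i0 false m Φ = 0 then formulaProb2 n m p Φ else 0) := hmain
    _ ≤ (1 + 4 * m * Q) / R + (1 + 4 * m * Q) / R := add_le_add hb1 hb2
    _ ≤ (8 / ((m:ℝ) * X) ^ 2 + 16 / ((m:ℝ) * X)) + (8 / ((m:ℝ) * X) ^ 2 + 16 / ((m:ℝ) * X)) :=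
        add_le_add hfrac hfrac
    _ = 16 / ((m:ℝ) * X) ^ 2 + 32 / ((m:ℝ) * X) := by ring

lemma unsat_eq (hn : 2 ≤ n) (hp : PV n p) (m : ℕ) :
    probUnsat2 n m p = 1 - probSat2 n m p := by
  have h : probUnsat2 n m p + probSat2 n m p = 1 := by
    rw [probUnsat2, probSat2, ← Finset.sum_add_distrib]
    rw [Finset.sum_congr rfl (fun Φ _ => by
      by_cases h : Sat2 Φ <;> simp [h] :
      ∀ Φ ∈ (Finset.univ : Finset (Fin m → (Fin n × Bool) × (Fin n × Bool))),
        ((if ¬ Sat2 Φ then formulaProb2 n m p Φ else 0)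
          + (if Sat2 Φ then formulaProb2 n m p Φ else 0)) = formulaProb2 n m p Φ)]
    exact sum_W hn hp m
  linarith

lemma probSat_nonneg (hn : 2 ≤ n) (hp : PV n p) (m : ℕ) : 0 ≤ probSat2 n m p :=
  Finset.sum_nonneg fun Φ _ => by
    by_cases h : Sat2 Φ <;> simp [h, W_nonneg hn hp Φ]

lemma X_le_one (hn : 2 ≤ n) (hp : PV n p) :
    Cconst n p * p 0 * Real.sqrt (∑ i ∈ Finset.Ico 1 n, p i ^ 2) ≤ 1 := by
  have hp0 := hp.2.2 0 (by omega)
  have hCpos := C_pos hn hp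
  set S1 := ∑ i ∈ Finset.Ico 1 n, p i ^ 2 with hS1
  have hsum1 : ∑ i ∈ Finset.Ico 1 n, p i = 1 - p 0 := by
    have := hp.1
    rw [Finset.range_eq_Ico, Finset.sum_eq_sum_Ico_succ_bot (by omega : 0 < n)] at this
    linarith
  have hnn : ∀ i ∈ Finset.Ico 1 n, 0 ≤ p i :=
    fun i hi => (hp.2.2 i (Finset.mem_Ico.1 hi).2).le
  have hsq : S1 ≤ (1 - p 0) ^ 2 := by
    rw [hS1, ← hsum1]
    calc ∑ i ∈ Finset.Ico 1 n, p i ^ 2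
        ≤ ∑ i ∈ Finset.Ico 1 n, (∑ j ∈ Finset.Ico 1 n, p j) * p i := by
          apply Finset.sum_le_sum
          intro i hi
          have h1 := hnn i hi
          have h2 : p i ≤ ∑ j ∈ Finset.Ico 1 n, p j := Finset.single_le_sum hnn hi
          nlinarith
      _ = (∑ j ∈ Finset.Ico 1 n, p j) ^ 2 := by rw [← Finset.mul_sum, sq]
  have hp0lt := p0_lt_one hn hp
  have hsqrt : Real.sqrt S1 ≤ 1 - p 0 := by
    calc Real.sqrt S1 ≤ Real.sqrt ((1 - p 0) ^ 2) := Real.sqrt_le_sqrt hsq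
      _ = 1 - p 0 := Real.sqrt_sq (by linarith)
  have hCle : Cconst n p ≤ (1 - p 0)⁻¹ := by
    rw [Cconst]
    have h1 : 1 - p 0 ≤ 1 - ∑ i ∈ Finset.range n, p i ^ 2 := by
      linarith [sumsq_le_p0 hn hp]
    exact inv_anti₀ (by linarith) h1
  have hS1nn : 0 ≤ Real.sqrt S1 := Real.sqrt_nonneg _
  calc Cconst n p * p 0 * Real.sqrt S1 ≤ (1 - p 0)⁻¹ * p 0 * (1 - p 0) := by
        apply mul_le_mul
        · exact mul_le_mul_of_nonneg_right hCle hp0.le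
        · exact hsqrt
        · exact hS1nn
        · have h3 : (0:ℝ) < (1 - p 0)⁻¹ := by
            have : (0:ℝ) < 1 - p 0 := by linarith
            positivity
          positivity
    _ = p 0 := by
        have : (1:ℝ) - p 0 ≠ 0 := by linarith
        field_simp
    _ ≤ 1 := hp0lt.le

end Core3



/-- For `p₁² = Θ(∑_{i=1}^n pᵢ²)`, `p₂² = o(∑_{i=2}^n pᵢ²)` and
`m = ω((C·p₁·(∑_{i=2}^n pᵢ²)^{1/2})⁻¹)`, the random formula is unsatisfiable with
probability `1 - o(1)`. -/
theorem nonuniform_2SAT_unsat_above_coarse_threshold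
    (p : ℕ → ℕ → ℝ) (hp : ProbEnsemble p)
    (hΘ : (fun n => p n 0 ^ 2) =Θ[atTop] fun n => ∑ i ∈ Finset.range n, p n i ^ 2)
    (ho : (fun n => p n 1 ^ 2) =o[atTop] fun n => ∑ i ∈ Finset.Ico 1 n, p n i ^ 2)
    (m : ℕ → ℕ)
    (hm : (fun n => coarseBound p n) =o[atTop] fun n => (m n : ℝ)) :
    Tendsto (fun n => probUnsat2 n (m n) (p n)) atTop (nhds 1) := by
  classical
  have hPV : ∀ n, 2 ≤ n → PV n (p n) := fun n hn => hp n (by omega)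
  set T : ℕ → ℝ := fun n => (m n : ℝ) *
    (Cconst n (p n) * p n 0 * Real.sqrt (∑ i ∈ Finset.Ico 1 n, p n i ^ 2)) with hT
  have hcb : ∀ n, 2 ≤ n →
      0 < Cconst n (p n) * p n 0 * Real.sqrt (∑ i ∈ Finset.Ico 1 n, p n i ^ 2) := by
    intro n hn
    have hPVn := hPV n hn
    have h1 := C_pos hn hPVn
    have h2 := hPVn.2.2 0 (by omega)
    have hS1pos : 0 < ∑ i ∈ Finset.Ico 1 n, p n i ^ 2 := by
      apply Finset.sum_pos' (fun i _ => sq_nonneg _)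
      exact ⟨1, Finset.mem_Ico.2 ⟨le_refl 1, by omega⟩,
        by have := hPVn.2.2 1 (by omega); positivity⟩
    have h3 := Real.sqrt_pos.2 hS1pos
    positivity
  have hTm : ∀ n, 2 ≤ n → T n ≤ (m n : ℝ) := by
    intro n hn
    have hX := X_le_one hn (hPV n hn)
    have h0 : (0:ℝ) ≤ (m n : ℝ) := Nat.cast_nonneg _
    calc T n ≤ (m n : ℝ) * 1 := mul_le_mul_of_nonneg_left hX h0
      _ = (m n : ℝ) := mul_one _
  have hTtop : Tendsto T atTop atTop := by
    rw [tendsto_atTop]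
    intro b
    have hb : (0:ℝ) < max b 1 := lt_of_lt_of_le one_pos (le_max_right b 1)
    have hsmall := hm.def (show (0:ℝ) < (max b 1)⁻¹ by positivity)
    filter_upwards [hsmall, eventually_ge_atTop 2] with n hn1 hn2
    have hx := hcb n hn2
    have hcbpos : 0 < coarseBound p n := inv_pos.2 hx
    rw [Real.norm_eq_abs, Real.norm_eq_abs, abs_of_pos hcbpos,
      abs_of_nonneg (Nat.cast_nonneg _)] at hn1
    have h3 : (1:ℝ) ≤ (max b 1)⁻¹ * (m n : ℝ) *
        (Cconst n (p n) * p n 0 * Real.sqrt (∑ i ∈ Finset.Ico 1 n, p n i ^ 2)) := by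
      have h4 : coarseBound p n *
          (Cconst n (p n) * p n 0 * Real.sqrt (∑ i ∈ Finset.Ico 1 n, p n i ^ 2)) = 1 :=
        inv_mul_cancel₀ (ne_of_gt hx)
      calc (1:ℝ) = coarseBound p n *
            (Cconst n (p n) * p n 0 * Real.sqrt (∑ i ∈ Finset.Ico 1 n, p n i ^ 2)) := h4.symm
        _ ≤ ((max b 1)⁻¹ * (m n : ℝ)) *
            (Cconst n (p n) * p n 0 * Real.sqrt (∑ i ∈ Finset.Ico 1 n, p n i ^ 2)) :=
            mul_le_mul_of_nonneg_right hn1 hx.le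
        _ = (max b 1)⁻¹ * (m n : ℝ) *
            (Cconst n (p n) * p n 0 * Real.sqrt (∑ i ∈ Finset.Ico 1 n, p n i ^ 2)) := by ring
    have h5 : max b 1 ≤ T n := by
      have h6 := mul_le_mul_of_nonneg_left h3 hb.le
      rw [mul_one] at h6
      calc max b 1 ≤ max b 1 * ((max b 1)⁻¹ * (m n : ℝ) *
            (Cconst n (p n) * p n 0 * Real.sqrt (∑ i ∈ Finset.Ico 1 n, p n i ^ 2))) := h6
        _ = (max b 1 * (max b 1)⁻¹) * T n := by rw [hT]; ring
        _ = T n := by rw [mul_inv_cancel₀ (ne_of_gt hb), one_mul]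
    exact le_trans (le_max_left b 1) h5
  have hm2ev : ∀ᶠ n in atTop, 2 ≤ m n := by
    filter_upwards [hTtop.eventually_ge_atTop 2, eventually_ge_atTop 2] with n h1 h2
    have h3 : (2:ℝ) ≤ (m n : ℝ) := le_trans h1 (hTm n h2)
    exact_mod_cast h3
  have hbound : ∀ᶠ n in atTop, probSat2 n (m n) (p n) ≤ 16 / (T n) ^ 2 + 32 / T n := by
    filter_upwards [hm2ev, eventually_ge_atTop 2] with n h1 h2
    exact main_bound h2 (hPV n h2) h1
  have hnn : ∀ᶠ n in atTop, 0 ≤ probSat2 n (m n) (p n) := by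
    filter_upwards [eventually_ge_atTop 2] with n h2
    exact probSat_nonneg h2 (hPV n h2) (m n)
  have hzero : Tendsto (fun n => 16 / (T n) ^ 2 + 32 / T n) atTop (nhds 0) := by
    have h1 : Tendsto (fun n => T n * T n) atTop atTop := hTtop.atTop_mul_atTop₀ hTtop
    have h2 : Tendsto (fun n => 16 / (T n * T n)) atTop (nhds 0) :=
      Tendsto.div_atTop tendsto_const_nhds h1
    have h3 : Tendsto (fun n => 32 / T n) atTop (nhds 0) :=
      Tendsto.div_atTop tendsto_const_nhds hTtop
    have h4 := h2.add h3
    simp only [add_zero] at h4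
    convert h4 using 2 with n
    rw [sq]
  have hsat0 : Tendsto (fun n => probSat2 n (m n) (p n)) atTop (nhds 0) :=
    squeeze_zero' hnn hbound hzero
  have hfinal : Tendsto (fun n => 1 - probSat2 n (m n) (p n)) atTop (nhds 1) := by
    have := tendsto_const_nhds (x := (1:ℝ)) (f := atTop (α := ℕ))
    have h5 := this.sub hsat0
    simpa using h5
  refine Tendsto.congr' ?_ hfinal
  filter_upwards [eventually_ge_atTop 2] with n h2
  exact (unsat_eq h2 (hPV n h2) (m n)).symm
end
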